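/- arXiv:1904.09253 — 3 statements merged into one kernel-verified Lean document; each statement's English description precedes it below -/
import Mathlib

section
/- The critical length of the operator D³ + D (kernel spanned by 1, cos x, sin x) equals 2π, and the critical length of the operator D⁴ + D² (kernel spanned by 1, x, cos x, sin x) also equals 2π. Equivalently: for 0 < h < 2π every nonzero F(x) = a + b·x + c·cos x + d·sin x vanishes at most 3 times in [0,h] counting multiplicities up to 4, and this fails for h = 2π; similarly with the three-dimensional space {a + c·cos x + d·sin x} and at most 2 zeros counting multiplicities up to 3. -/
open scoped BigOperators

noncomputable section

/-- `F` vanishes to order at least `m` at `x`: all derivatives of order `< m` vanish at `x`. -/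
def VanishAtLeast (F : ℝ → ℝ) (m : ℕ) (x : ℝ) : Prop :=
  ∀ j < m, iteratedDeriv j F x = 0

/-- `F` vanishes at most `N` times in `J`, counting multiplicities up to `μ`. -/
def VanishAtMost (F : ℝ → ℝ) (μ N : ℕ) (J : Set ℝ) : Prop :=
  ∀ (r : ℕ) (xs : Fin r → ℝ) (m : Fin r → ℕ),
    (∀ i, xs i ∈ J) → Function.Injective xs →
    (∀ i, 1 ≤ m i) → (∀ i, m i ≤ μ) →
    (∀ i, VanishAtLeast F (m i) (xs i)) →
    ∑ i, m i ≤ N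

/-- Kernel of the operator `L = D^(n+1) + ∑_{i=0}^n a i • D^i`. -/
def kerOp (n : ℕ) (a : Fin (n + 1) → ℝ) : Set (ℝ → ℝ) :=
  {F | ContDiff ℝ (⊤ : ℕ∞) F ∧
    ∀ x : ℝ, iteratedDeriv (n + 1) F x + ∑ i : Fin (n + 1), a i * iteratedDeriv (i : ℕ) F x = 0}

/-- The (restriction of the) kernel of `L` is an Extended Chebyshev space on `J`. -/
def IsECOn (n : ℕ) (a : Fin (n + 1) → ℝ) (J : Set ℝ) : Prop :=
  ∀ F ∈ kerOp n a, F ≠ 0 → VanishAtMost F (n + 1) n J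

/-- Critical length of the operator `L = D^(n+1) + ∑ a i • D^i`, as an extended real. -/
def critLen (n : ℕ) (a : Fin (n + 1) → ℝ) : EReal :=
  sSup {l : EReal | ∃ h : ℝ, l = (h : EReal) ∧ 0 < h ∧ IsECOn n a (Set.Icc 0 h)}

def F4 (a b c d : ℝ) : ℝ → ℝ := fun x => a + b * x + c * Real.cos x + d * Real.sin x

lemma F4_hasDerivAt (a b c d x : ℝ) : HasDerivAt (F4 a b c d) (F4 b 0 d (-c) x) x := by
  have h := (((hasDerivAt_const x a).add ((hasDerivAt_id x).const_mul b)).add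
      ((Real.hasDerivAt_cos x).const_mul c)).add ((Real.hasDerivAt_sin x).const_mul d)
  have e : 0 + b * 1 + c * -Real.sin x + d * Real.cos x = F4 b 0 d (-c) x := by
    unfold F4; ring
  exact e ▸ h

lemma F4_deriv (a b c d : ℝ) : deriv (F4 a b c d) = F4 b 0 d (-c) :=
  funext fun x => (F4_hasDerivAt a b c d x).deriv

lemma F4_cont (a b c d : ℝ) : Continuous (F4 a b c d) := by
  unfold F4; fun_prop

lemma F4_it1 (a b c d : ℝ) : iteratedDeriv 1 (F4 a b c d) = F4 b 0 d (-c) := by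
  rw [iteratedDeriv_one, F4_deriv]

lemma F4_it2 (a b c d : ℝ) : iteratedDeriv 2 (F4 a b c d) = F4 0 0 (-c) (-d) := by
  rw [iteratedDeriv_succ, F4_it1, F4_deriv]

lemma F4_it3 (a b c d : ℝ) : iteratedDeriv 3 (F4 a b c d) = F4 0 0 (-d) c := by
  rw [iteratedDeriv_succ, F4_it2, F4_deriv]; norm_num

lemma van_val {a b c d : ℝ} {m : ℕ} {x : ℝ} (h : VanishAtLeast (F4 a b c d) m x)
    (hm : 1 ≤ m) : a + b * x + c * Real.cos x + d * Real.sin x = 0 := by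
  have := h 0 (by omega); rwa [iteratedDeriv_zero] at this

lemma van_d1 {a b c d : ℝ} {m : ℕ} {x : ℝ} (h : VanishAtLeast (F4 a b c d) m x)
    (hm : 2 ≤ m) : b + d * Real.cos x + (-c) * Real.sin x = 0 := by
  have := h 1 (by omega); rw [F4_it1] at this
  have : b + 0 * x + d * Real.cos x + (-c) * Real.sin x = 0 := this
  linarith

lemma van_d2 {a b c d : ℝ} {m : ℕ} {x : ℝ} (h : VanishAtLeast (F4 a b c d) m x)
    (hm : 3 ≤ m) : (-c) * Real.cos x + (-d) * Real.sin x = 0 := by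
  have := h 2 (by omega); rw [F4_it2] at this
  have : 0 + 0 * x + (-c) * Real.cos x + (-d) * Real.sin x = 0 := this
  linarith

lemma van_d3 {a b c d : ℝ} {m : ℕ} {x : ℝ} (h : VanishAtLeast (F4 a b c d) m x)
    (hm : 4 ≤ m) : (-d) * Real.cos x + c * Real.sin x = 0 := by
  have := h 3 (by omega); rw [F4_it3] at this
  have : 0 + 0 * x + (-d) * Real.cos x + c * Real.sin x = 0 := this
  linarith

/-- Z1: a "triple zero" of `a + c cos + d sin` forces `c = d = 0`. -/
lemma Z1 {a c d x : ℝ} (hc : ¬ (c = 0 ∧ d = 0))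
    (h0 : a + c * Real.cos x + d * Real.sin x = 0)
    (h1 : d * Real.cos x - c * Real.sin x = 0)
    (h2 : -(c * Real.cos x) - d * Real.sin x = 0) : False := by
  have hpy := Real.sin_sq_add_cos_sq x
  have ha : a = 0 := by linarith
  have hP : c * Real.cos x + d * Real.sin x = 0 := by linarith
  have hc0 : c = 0 := by
    linear_combination Real.cos x * hP - Real.sin x * h1 - c * hpy
  have hd0 : d = 0 := by
    linear_combination Real.sin x * hP + Real.cos x * h1 - d * hpy
  exact hc ⟨hc0, hd0⟩

/-- cross lemma: two zeros of the derivative `d cos - c sin` give `sin (x - y) = 0`. -/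
lemma Zcross {c d x y : ℝ} (hc : ¬ (c = 0 ∧ d = 0))
    (h1 : d * Real.cos x - c * Real.sin x = 0)
    (h2 : d * Real.cos y - c * Real.sin y = 0) : Real.sin (x - y) = 0 := by
  have hcs : c * Real.sin (x - y) = 0 := by
    rw [Real.sin_sub]; linear_combination (-Real.cos y) * h1 + Real.cos x * h2
  have hds : d * Real.sin (x - y) = 0 := by
    rw [Real.sin_sub]; linear_combination (-Real.sin y) * h1 + Real.sin x * h2
  rcases not_and_or.mp hc with h | h
  · exact (mul_eq_zero.mp hcs).resolve_left h
  · exact (mul_eq_zero.mp hds).resolve_left h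

/-- Z2: no two distinct double zeros within distance `< 2π`. -/
lemma Z2 {a c d x y : ℝ} (hc : ¬ (c = 0 ∧ d = 0)) (hxy : x < y) (hlt : y - x < 2 * Real.pi)
    (h0x : a + c * Real.cos x + d * Real.sin x = 0)
    (h1x : d * Real.cos x - c * Real.sin x = 0)
    (h0y : a + c * Real.cos y + d * Real.sin y = 0)
    (h1y : d * Real.cos y - c * Real.sin y = 0) : False := by
  have hs := Zcross hc h1x h1y
  obtain ⟨n, hn⟩ := Real.sin_eq_zero_iff.mp hs
  have hpi := Real.pi_pos
  have hn1 : (n : ℝ) = -1 := by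
    have h1 : (n : ℝ) * Real.pi < 0 := by rw [hn]; linarith
    have h2 : (-2 : ℝ) * Real.pi < (n : ℝ) * Real.pi := by rw [hn]; linarith
    have hna : (n : ℝ) < 0 := by nlinarith
    have hnb : (-2 : ℝ) < (n : ℝ) := by nlinarith
    have hna' : n < 0 := by exact_mod_cast hna
    have hnb' : (-2 : ℤ) < n := by exact_mod_cast hnb
    have : n = -1 := by omega
    exact_mod_cast this
  have hyx : y = x + Real.pi := by rw [hn1] at hn; linarith
  subst hyx
  rw [Real.cos_add_pi, Real.sin_add_pi] at h0y
  have ha : a = 0 := by linarith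
  have hP : c * Real.cos x + d * Real.sin x = 0 := by linarith
  have hpy := Real.sin_sq_add_cos_sq x
  exact hc ⟨by linear_combination Real.cos x * hP - Real.sin x * h1x - c * hpy,
    by linear_combination Real.sin x * hP + Real.cos x * h1x - d * hpy⟩

/-- Z3: a double zero plus any other zero within distance `< 2π` is impossible. -/
lemma Z3 {a c d x y : ℝ} (hc : ¬ (c = 0 ∧ d = 0)) (hxy : x ≠ y) (hlt : |x - y| < 2 * Real.pi)
    (h0x : a + c * Real.cos x + d * Real.sin x = 0)
    (h1x : d * Real.cos x - c * Real.sin x = 0)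
    (h0y : a + c * Real.cos y + d * Real.sin y = 0) : False := by
  have hpx := Real.sin_sq_add_cos_sq x
  have hpyy := Real.sin_sq_add_cos_sq y
  have ha2 : a ^ 2 = c ^ 2 + d ^ 2 := by
    linear_combination (a - c * Real.cos x - d * Real.sin x) * h0x -
      (d * Real.cos x - c * Real.sin x) * h1x + (c ^ 2 + d ^ 2) * hpx
  have hQy2 : (d * Real.cos y - c * Real.sin y) ^ 2 = 0 := by
    linear_combination (-(c * Real.cos y + d * Real.sin y - a)) * h0y +
      (c ^ 2 + d ^ 2) * hpyy - ha2
  have h1y : d * Real.cos y - c * Real.sin y = 0 := by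
    have := sq_eq_zero_iff.mp hQy2; exact this
  rcases lt_or_gt_of_ne hxy with h | h
  · exact Z2 hc h (by rw [abs_sub_comm] at hlt; rw [abs_of_pos (by linarith)] at hlt; linarith)
      h0x h1x h0y h1y
  · exact Z2 hc h (by rw [abs_of_pos (by linarith)] at hlt; linarith) h0y h1y h0x h1x

/-- helper: two zeros of `a + c cos + d sin` give a zero of the derivative at the midpoint. -/
lemma Zmid {a c d x y : ℝ} (hxy : x < y) (hlt : y - x < 2 * Real.pi)
    (h0x : a + c * Real.cos x + d * Real.sin x = 0)
    (h0y : a + c * Real.cos y + d * Real.sin y = 0) :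
    d * Real.cos ((x + y) / 2) - c * Real.sin ((x + y) / 2) = 0 := by
  have e : c * (Real.cos x - Real.cos y) + d * (Real.sin x - Real.sin y) = 0 := by linarith
  rw [Real.cos_sub_cos, Real.sin_sub_sin] at e
  have hs : Real.sin ((x - y) / 2) ≠ 0 := by
    have h1 : 0 < (y - x) / 2 := by linarith
    have h2 : (y - x) / 2 < Real.pi := by linarith
    have := Real.sin_pos_of_pos_of_lt_pi h1 h2
    have hneg : Real.sin ((x - y) / 2) = -Real.sin ((y - x) / 2) := by
      rw [← Real.sin_neg]; ring_nf
    rw [hneg]; intro hz; rw [neg_eq_zero] at hz; linarith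
  have key : Real.sin ((x - y) / 2) * (d * Real.cos ((x + y) / 2) - c * Real.sin ((x + y) / 2)) = 0 := by
    linear_combination (1/2) * e
  exact (mul_eq_zero.mp key).resolve_left hs

/-- Z4: three distinct zeros within a window of length `< 2π` are impossible. -/
lemma Z4 {a c d x y z : ℝ} (hc : ¬ (c = 0 ∧ d = 0)) (hxy : x < y) (hyz : y < z)
    (hlt : z - x < 2 * Real.pi)
    (h0x : a + c * Real.cos x + d * Real.sin x = 0)
    (h0y : a + c * Real.cos y + d * Real.sin y = 0)
    (h0z : a + c * Real.cos z + d * Real.sin z = 0) : False := by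
  have hw1 := Zmid hxy (by linarith) h0x h0y
  have hw2 := Zmid hyz (by linarith) h0y h0z
  have hs := Zcross hc hw1 hw2
  have hd : (x + y) / 2 - (y + z) / 2 = -((z - x) / 2) := by ring
  rw [hd, Real.sin_neg, neg_eq_zero] at hs
  have h1 : 0 < (z - x) / 2 := by linarith
  have h2 : (z - x) / 2 < Real.pi := by linarith
  linarith [Real.sin_pos_of_pos_of_lt_pi h1 h2]

/-- Sorting wrapper: it suffices to bound sums over strictly monotone configurations. -/
lemma vanishAtMost_of_sorted (F : ℝ → ℝ) (μ N : ℕ) (J : Set ℝ)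
    (H : ∀ (r : ℕ) (xs : Fin r → ℝ) (m : Fin r → ℕ), StrictMono xs →
      (∀ i, xs i ∈ J) → (∀ i, 1 ≤ m i) → (∀ i, m i ≤ μ) →
      (∀ i, VanishAtLeast F (m i) (xs i)) → ∑ i, m i ≤ N) :
    VanishAtMost F μ N J := by
  intro r xs m hmem hinj h1 hμ hv
  set σ := Tuple.sort xs with hσ
  have hmono : StrictMono (xs ∘ σ) :=
    (Tuple.monotone_sort xs).strictMono_of_injective (hinj.comp σ.injective)
  have := H r (xs ∘ σ) (m ∘ σ) hmono (fun i => hmem (σ i)) (fun i => h1 (σ i))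
    (fun i => hμ (σ i)) (fun i => hv (σ i))
  calc ∑ i, m i = ∑ i, m (σ i) := (Equiv.sum_comp σ m).symm
    _ ≤ N := this

/-- Sorted core bound for `a + c cos + d sin` with `(c,d) ≠ 0`: total multiplicity ≤ 2. -/
lemma sum3 {a c d h : ℝ} (hc : ¬ (c = 0 ∧ d = 0)) (hh : h < 2 * Real.pi)
    (r : ℕ) (xs : Fin r → ℝ) (m : Fin r → ℕ) (hmono : StrictMono xs)
    (hmem : ∀ i, xs i ∈ Set.Icc (0:ℝ) h) (h1 : ∀ i, 1 ≤ m i)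
    (hv : ∀ i, VanishAtLeast (F4 a 0 c d) (m i) (xs i)) : ∑ i, m i ≤ 2 := by
  by_contra hcon
  push_neg at hcon
  -- every point is a zero
  have hz : ∀ i, a + c * Real.cos (xs i) + d * Real.sin (xs i) = 0 := by
    intro i
    have := van_val (hv i) (h1 i); linarith [this]
  -- points with multiplicity ≥ 2 are zeros of the derivative
  have hz1 : ∀ i, 2 ≤ m i → d * Real.cos (xs i) - c * Real.sin (xs i) = 0 := by
    intro i h2
    have := van_d1 (hv i) h2; linarith [this]
  -- no multiplicity ≥ 3
  have hm2 : ∀ i, m i ≤ 2 := by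
    intro i; by_contra hgt; push_neg at hgt
    have h2 := van_d2 (hv i) (by omega)
    exact Z1 hc (hz i) (hz1 i (by omega)) (by linarith [h2])
  -- pairwise distances less than 2π
  have hdist : ∀ i j, |xs i - xs j| < 2 * Real.pi := by
    intro i j
    have hi := hmem i; have hj := hmem j
    rw [abs_sub_lt_iff]
    constructor <;> · simp only [Set.mem_Icc] at hi hj; linarith [hi.1, hi.2, hj.1, hj.2]
  by_cases hex : ∃ i, 2 ≤ m i
  · obtain ⟨i, hi2⟩ := hex
    have hall : ∀ j, j = i := by
      intro j; by_contra hne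
      exact Z3 hc (fun he => hne (hmono.injective he).symm) (hdist i j) (hz i) (hz1 i hi2) (hz j)
    have huniv : (Finset.univ : Finset (Fin r)) = {i} := by
      apply Finset.eq_singleton_iff_unique_mem.mpr
      exact ⟨Finset.mem_univ i, fun j _ => hall j⟩
    rw [huniv, Finset.sum_singleton] at hcon
    have := hm2 i; omega
  · push_neg at hex
    have hm1 : ∀ i, m i = 1 := by intro i; have := hex i; have := h1 i; omega
    have hsum : ∑ i, m i = r := by
      rw [Finset.sum_congr rfl (fun i _ => hm1 i)]
      simp
    rw [hsum] at hcon
    have hr3 : 3 ≤ r := hcon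
    have i0 : Fin r := ⟨0, by omega⟩
    have i1 : Fin r := ⟨1, by omega⟩
    have i2 : Fin r := ⟨2, by omega⟩
    exact Z4 hc (hmono (show (⟨0, by omega⟩ : Fin r) < ⟨1, by omega⟩ from by simp [Fin.mk_lt_mk]))
      (hmono (show (⟨1, by omega⟩ : Fin r) < ⟨2, by omega⟩ from by simp [Fin.mk_lt_mk]))
      (by
        have ha' := hmem ⟨0, by omega⟩; have hb' := hmem ⟨2, by omega⟩
        simp only [Set.mem_Icc] at ha' hb'; linarith [ha'.1, hb'.2])
      (hz _) (hz _) (hz _)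

/-- Sorted core bound for `a + bx + c cos + d sin` with `(c,d) ≠ 0`: total multiplicity ≤ 3. -/
lemma sum4 {a b c d h : ℝ} (hc : ¬ (c = 0 ∧ d = 0)) (hh : h < 2 * Real.pi)
    (r : ℕ) (xs : Fin r → ℝ) (m : Fin r → ℕ) (hmono : StrictMono xs)
    (hmem : ∀ i, xs i ∈ Set.Icc (0:ℝ) h) (hm1 : ∀ i, 1 ≤ m i)
    (hv : ∀ i, VanishAtLeast (F4 a b c d) (m i) (xs i)) : ∑ i, m i ≤ 3 := by
  have hc' : ¬ (d = 0 ∧ -c = 0) := by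
    rintro ⟨h1, h2⟩; exact hc ⟨by linarith, h1⟩
  by_contra hcon
  push_neg at hcon
  have hIcc : ∀ i, 0 ≤ xs i ∧ xs i ≤ h := fun i => hmem i
  -- zero conditions on the derivative G = b + d cos - c sin
  have hz1 : ∀ i, 2 ≤ m i → b + d * Real.cos (xs i) + (-c) * Real.sin (xs i) = 0 :=
    fun i h2 => van_d1 (hv i) h2
  have hz2 : ∀ i, 3 ≤ m i → (-c) * Real.cos (xs i) - d * Real.sin (xs i) = 0 := by
    intro i h3; have := van_d2 (hv i) h3; linarith
  have hz3 : ∀ i, 4 ≤ m i → -(d * Real.cos (xs i)) - (-c) * Real.sin (xs i) = 0 := by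
    intro i h4; have := van_d3 (hv i) h4; linarith
  -- Rolle points
  have hrolle : ∀ i j : Fin r, xs i < xs j →
      ∃ y, xs i < y ∧ y < xs j ∧ b + d * Real.cos y + (-c) * Real.sin y = 0 := by
    intro i j hij
    have hfc : ContinuousOn (F4 a b c d) (Set.Icc (xs i) (xs j)) :=
      (F4_cont a b c d).continuousOn
    have heq : F4 a b c d (xs i) = F4 a b c d (xs j) := by
      have e1 := van_val (hv i) (hm1 i); have e2 := van_val (hv j) (hm1 j)
      simp only [F4]; linarith
    obtain ⟨y, hy, hdy⟩ := exists_deriv_eq_zero hij hfc heq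
    refine ⟨y, hy.1, hy.2, ?_⟩
    rw [F4_deriv] at hdy
    have : b + 0 * y + d * Real.cos y + (-c) * Real.sin y = 0 := hdy
    linarith
  -- case analysis on the number of points
  match r, xs, m, hmono, hIcc, hm1, hz1, hz2, hz3, hrolle, hcon with
  | 0, xs, m, hmono, hIcc, hm1, hz1, hz2, hz3, hrolle, hcon => simp at hcon
  | 1, xs, m, hmono, hIcc, hm1, hz1, hz2, hz3, hrolle, hcon =>
    rw [Fin.sum_univ_one] at hcon
    exact Z1 hc' (hz1 0 (by omega)) (hz2 0 (by omega)) (hz3 0 (by omega))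
  | 2, xs, m, hmono, hIcc, hm1, hz1, hz2, hz3, hrolle, hcon =>
    rw [Fin.sum_univ_two] at hcon
    have hlt : xs 0 < xs 1 := hmono (by decide)
    obtain ⟨y, hy1, hy2, hy0⟩ := hrolle 0 1 hlt
    have hd01 : xs 1 - xs 0 < 2 * Real.pi := by
      linarith [(hIcc 0).1, (hIcc 1).2]
    by_cases h30 : 3 ≤ m 0
    · exact Z3 hc' (by intro he; linarith) (by rw [abs_of_neg (by linarith)]; linarith)
        (hz1 0 (by omega)) (hz2 0 h30) hy0
    · by_cases h31 : 3 ≤ m 1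
      · exact Z3 hc' (by intro he; linarith) (by rw [abs_of_pos (by linarith)]; linarith)
          (hz1 1 (by omega)) (hz2 1 h31) hy0
      · have hm0 : 2 ≤ m 0 := by omega
        have hm1' : 2 ≤ m 1 := by omega
        exact Z4 hc' hy1 hy2 hd01 (hz1 0 hm0) hy0 (hz1 1 hm1')
  | 3, xs, m, hmono, hIcc, hm1, hz1, hz2, hz3, hrolle, hcon =>
    rw [Fin.sum_univ_three] at hcon
    have hlt01 : xs 0 < xs 1 := hmono (by decide)
    have hlt12 : xs 1 < xs 2 := hmono (by decide)
    obtain ⟨y1, hy11, hy12, hy10⟩ := hrolle 0 1 hlt01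
    obtain ⟨y2, hy21, hy22, hy20⟩ := hrolle 1 2 hlt12
    have hd02 : xs 2 - xs 0 < 2 * Real.pi := by linarith [(hIcc 0).1, (hIcc 2).2]
    by_cases h20 : 2 ≤ m 0
    · exact Z4 hc' hy11 (by linarith) (by linarith) (hz1 0 h20) hy10 hy20
    · by_cases h21 : 2 ≤ m 1
      · exact Z4 hc' (show y1 < xs 1 from hy12) hy21 (by linarith) hy10 (hz1 1 h21) hy20
      · by_cases h22 : 2 ≤ m 2
        · exact Z4 hc' (show y1 < y2 from by linarith) hy22 (by linarith) hy10 hy20 (hz1 2 h22)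
        · omega
  | (r + 4), xs, m, hmono, hIcc, hm1, hz1, hz2, hz3, hrolle, hcon =>
    have h01 : xs ⟨0, by omega⟩ < xs ⟨1, by omega⟩ := hmono (Fin.mk_lt_mk.mpr (by omega))
    have h12 : xs ⟨1, by omega⟩ < xs ⟨2, by omega⟩ := hmono (Fin.mk_lt_mk.mpr (by omega))
    have h23 : xs ⟨2, by omega⟩ < xs ⟨3, by omega⟩ := hmono (Fin.mk_lt_mk.mpr (by omega))
    obtain ⟨y1, hy11, hy12, hy10⟩ := hrolle _ _ h01
    obtain ⟨y2, hy21, hy22, hy20⟩ := hrolle _ _ h12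
    obtain ⟨y3, hy31, hy32, hy30⟩ := hrolle _ _ h23
    have hd : y3 - y1 < 2 * Real.pi := by
      linarith [(hIcc ⟨0, by omega⟩).1, (hIcc ⟨3, by omega⟩).2]
    exact Z4 hc' (show y1 < y2 from by linarith) (show y2 < y3 from by linarith) hd hy10 hy20 hy30

lemma main4 (h : ℝ) (h0 : 0 < h) (h2 : h < 2 * Real.pi) (a b c d : ℝ)
    (hne : F4 a b c d ≠ 0) :
    VanishAtMost (F4 a b c d) 4 3 (Set.Icc 0 h) := by
  by_cases hc : c = 0 ∧ d = 0
  · obtain ⟨rfl, rfl⟩ := hc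
    intro r xs m hmem hinj hm1 hmu hv
    by_cases hb : b = 0
    · subst hb
      have ha : a ≠ 0 := by
        intro ha; apply hne; funext x; simp [F4, ha]
      match r, xs, m, hv, hm1 with
      | 0, xs, m, hv, hm1 => simp
      | (r+1), xs, m, hv, hm1 =>
        exfalso
        have := van_val (hv 0) (hm1 0)
        simp at this
        exact ha this
    · -- F = a + bx with b ≠ 0 : at most one simple zero
      have hmone : ∀ i, m i = 1 := by
        intro i
        by_contra hne2
        have h2m : 2 ≤ m i := by have := hm1 i; omega
        have := van_d1 (hv i) h2m
        simp at this
        exact hb this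
      have hr1 : r ≤ 1 := by
        by_contra hr
        push_neg at hr
        have hlt : (⟨0, by omega⟩ : Fin r) ≠ ⟨1, by omega⟩ := by
          intro he; simp [Fin.mk.injEq] at he
        have e0 := van_val (hv ⟨0, by omega⟩) (hm1 _)
        have e1 := van_val (hv ⟨1, by omega⟩) (hm1 _)
        simp at e0 e1
        have : xs ⟨0, by omega⟩ = xs ⟨1, by omega⟩ := by
          have : b * xs ⟨0, by omega⟩ = b * xs ⟨1, by omega⟩ := by linarith
          exact mul_left_cancel₀ hb this
        exact hlt (hinj this)
      calc ∑ i, m i = ∑ i : Fin r, 1 := Finset.sum_congr rfl (fun i _ => hmone i)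
        _ = r := by simp
        _ ≤ 3 := by omega
  · apply vanishAtMost_of_sorted
    intro r xs m hmono hmem hm1 hmu hv
    exact sum4 hc h2 r xs m hmono hmem hm1 hv

lemma T3_eq (a c d : ℝ) :
    (fun x => a + c * Real.cos x + d * Real.sin x) = F4 a 0 c d := by
  funext x; simp [F4]

lemma main3 (h : ℝ) (h0 : 0 < h) (h2 : h < 2 * Real.pi) (a c d : ℝ)
    (hne : (fun x => a + c * Real.cos x + d * Real.sin x) ≠ 0) :
    VanishAtMost (fun x => a + c * Real.cos x + d * Real.sin x) 3 2 (Set.Icc 0 h) := by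
  rw [T3_eq] at hne ⊢
  by_cases hc : c = 0 ∧ d = 0
  · obtain ⟨rfl, rfl⟩ := hc
    intro r xs m hmem hinj hm1 hmu hv
    have ha : a ≠ 0 := by
      intro ha; apply hne; funext x; simp [F4, ha]
    match r, xs, m, hv, hm1 with
    | 0, xs, m, hv, hm1 => simp
    | (r+1), xs, m, hv, hm1 =>
      exfalso
      have := van_val (hv 0) (hm1 0)
      simp at this
      exact ha this
  · apply vanishAtMost_of_sorted
    intro r xs m hmono hmem hm1 hmu hv
    exact sum3 hc h2 r xs m hmono hmem hm1 hv

/-- harmonic oscillator: solutions of `g'' = -g` are `g 0 cos + g' 0 sin`. -/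
lemma ode_cos_sin (g : ℝ → ℝ) (hg : ContDiff ℝ (⊤ : ℕ∞) g)
    (hode : ∀ x, deriv (deriv g) x = -g x) :
    ∀ x, g x = g 0 * Real.cos x + deriv g 0 * Real.sin x := by
  have hgd : Differentiable ℝ g := hg.differentiable (by simp)
  have hg1 : ContDiff ℝ (⊤ : ℕ∞) (deriv g) := (contDiff_infty_iff_deriv.mp hg).2
  have hg1d : Differentiable ℝ (deriv g) := hg1.differentiable (by simp)
  set p : ℝ → ℝ := fun x => g x - g 0 * Real.cos x - deriv g 0 * Real.sin x with hp
  set q : ℝ → ℝ := fun x => deriv g x + g 0 * Real.sin x - deriv g 0 * Real.cos x with hq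
  have hpq : ∀ x, HasDerivAt p (q x) x := by
    intro x
    have h1 : HasDerivAt g (deriv g x) x := (hgd x).hasDerivAt
    have h := (h1.sub ((Real.hasDerivAt_cos x).const_mul (g 0))).sub
      ((Real.hasDerivAt_sin x).const_mul (deriv g 0))
    have e : deriv g x - g 0 * -Real.sin x - deriv g 0 * Real.cos x = q x := by
      simp only [hq]; ring
    exact e ▸ h
  have hqd : ∀ x, HasDerivAt q (-p x) x := by
    intro x
    have h1 : HasDerivAt (deriv g) (deriv (deriv g) x) x := (hg1d x).hasDerivAt
    have h := (h1.add ((Real.hasDerivAt_sin x).const_mul (g 0))).sub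
      ((Real.hasDerivAt_cos x).const_mul (deriv g 0))
    have e : deriv (deriv g) x + g 0 * Real.cos x - deriv g 0 * -Real.sin x = -p x := by
      rw [hode x]; simp only [hp]; ring
    exact e ▸ h
  set E : ℝ → ℝ := fun x => p x ^ 2 + q x ^ 2 with hE
  have hEd : ∀ x, HasDerivAt E 0 x := by
    intro x
    have h := ((hpq x).pow 2).add ((hqd x).pow 2)
    have e : (2 : ℕ) * p x ^ (2 - 1) * q x + (2 : ℕ) * q x ^ (2 - 1) * -p x = 0 := by
      push_cast; ring
    exact e ▸ h
  have hconst : ∀ x, E x = E 0 :=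
    fun x => is_const_of_deriv_eq_zero (fun y => (hEd y).differentiableAt)
      (fun y => (hEd y).deriv) x 0
  have hE0 : E 0 = 0 := by simp [hE, hp, hq]
  intro x
  have hx : p x ^ 2 + q x ^ 2 = 0 := by have h' := hconst x; rw [hE0] at h'; exact h'
  have hpx : p x = 0 := by nlinarith [sq_nonneg (p x), sq_nonneg (q x)]
  simp only [hp] at hpx
  linarith

lemma deriv_const_fun (F : ℝ → ℝ) (hd : Differentiable ℝ F) (h : ∀ x, deriv F x = 0) :
    ∀ x, F x = F 0 := fun x => is_const_of_deriv_eq_zero hd h x 0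

lemma ker2_char (F : ℝ → ℝ) (hF : F ∈ kerOp 2 ![0, 1, 0]) :
    ∃ a c d : ℝ, F = fun x => a + c * Real.cos x + d * Real.sin x := by
  obtain ⟨hsm, heq⟩ := hF
  have hode' : ∀ x, iteratedDeriv 3 F x + deriv F x = 0 := by
    intro x
    have := heq x
    simp [Fin.sum_univ_three, iteratedDeriv_one] at this
    linarith [this]
  set g := deriv F with hgdef
  have hgsm : ContDiff ℝ (⊤ : ℕ∞) g := (contDiff_infty_iff_deriv.mp hsm).2
  have hode : ∀ x, deriv (deriv g) x = -g x := by
    intro x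
    have h3 : iteratedDeriv 3 F = deriv (deriv (deriv F)) := by
      rw [iteratedDeriv_succ, iteratedDeriv_succ, iteratedDeriv_one]
    have := hode' x
    rw [h3] at this
    simp only [← hgdef] at this
    linarith
  have hgeq := ode_cos_sin g hgsm hode
  -- integrate once
  have hFd : Differentiable ℝ F := hsm.differentiable (by simp)
  set Φ : ℝ → ℝ := fun x => F x - (g 0 * Real.sin x - deriv g 0 * Real.cos x) with hΦ
  have hΦd : ∀ x, HasDerivAt Φ 0 x := by
    intro x
    have h1 : HasDerivAt F (g x) x := (hFd x).hasDerivAt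
    have h := h1.sub (((Real.hasDerivAt_sin x).const_mul (g 0)).sub
      ((Real.hasDerivAt_cos x).const_mul (deriv g 0)))
    have e : g x - (g 0 * Real.cos x - deriv g 0 * -Real.sin x) = 0 := by
      rw [hgeq x]; ring
    exact e ▸ h
  have hconst : ∀ x, Φ x = Φ 0 :=
    fun x => is_const_of_deriv_eq_zero (fun y => (hΦd y).differentiableAt)
      (fun y => (hΦd y).deriv) x 0
  refine ⟨F 0 + deriv g 0, -(deriv g 0), g 0, ?_⟩
  funext x
  have := hconst x
  simp only [hΦ] at this
  simp [Real.sin_zero, Real.cos_zero] at this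
  linarith

lemma ker3_char (F : ℝ → ℝ) (hF : F ∈ kerOp 3 ![0, 0, 1, 0]) :
    ∃ a b c d : ℝ, F = F4 a b c d := by
  obtain ⟨hsm, heq⟩ := hF
  have hode' : ∀ x, iteratedDeriv 4 F x + iteratedDeriv 2 F x = 0 := by
    intro x
    have := heq x
    simp [Fin.sum_univ_four] at this
    linarith [this]
  set g := deriv (deriv F) with hgdef
  have hF1sm : ContDiff ℝ (⊤ : ℕ∞) (deriv F) := (contDiff_infty_iff_deriv.mp hsm).2
  have hgsm : ContDiff ℝ (⊤ : ℕ∞) g := (contDiff_infty_iff_deriv.mp hF1sm).2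
  have hode : ∀ x, deriv (deriv g) x = -g x := by
    intro x
    have h4 : iteratedDeriv 4 F = deriv (deriv (deriv (deriv F))) := by
      rw [iteratedDeriv_succ, iteratedDeriv_succ, iteratedDeriv_succ, iteratedDeriv_one]
    have h2 : iteratedDeriv 2 F = deriv (deriv F) := by
      rw [iteratedDeriv_succ, iteratedDeriv_one]
    have := hode' x
    rw [h4, h2] at this
    simp only [← hgdef] at this
    linarith
  have hgeq := ode_cos_sin g hgsm hode
  have hFd : Differentiable ℝ F := hsm.differentiable (by simp)
  have hF1d : Differentiable ℝ (deriv F) := hF1sm.differentiable (by simp)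
  -- integrate once: deriv F
  set Ψ : ℝ → ℝ := fun x => deriv F x - (g 0 * Real.sin x - deriv g 0 * Real.cos x) with hΨ
  have hΨd : ∀ x, HasDerivAt Ψ 0 x := by
    intro x
    have h1 : HasDerivAt (deriv F) (g x) x := (hF1d x).hasDerivAt
    have h := h1.sub (((Real.hasDerivAt_sin x).const_mul (g 0)).sub
      ((Real.hasDerivAt_cos x).const_mul (deriv g 0)))
    have e : g x - (g 0 * Real.cos x - deriv g 0 * -Real.sin x) = 0 := by rw [hgeq x]; ring
    exact e ▸ h
  have hΨconst : ∀ x, Ψ x = Ψ 0 :=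
    fun x => is_const_of_deriv_eq_zero (fun y => (hΨd y).differentiableAt)
      (fun y => (hΨd y).deriv) x 0
  have hF1 : ∀ x, deriv F x = (deriv F 0 + deriv g 0) + g 0 * Real.sin x - deriv g 0 * Real.cos x := by
    intro x
    have := hΨconst x
    simp only [hΨ] at this
    simp [Real.sin_zero, Real.cos_zero] at this
    linarith
  -- integrate again
  set C1 := deriv F 0 + deriv g 0 with hC1
  set Θ : ℝ → ℝ := fun x => F x - (C1 * x + g 0 * (-Real.cos x) - deriv g 0 * Real.sin x) with hΘ
  have hΘd : ∀ x, HasDerivAt Θ 0 x := by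
    intro x
    have h1 : HasDerivAt F (deriv F x) x := (hFd x).hasDerivAt
    have h := h1.sub ((((hasDerivAt_id x).const_mul C1).add
      (((Real.hasDerivAt_cos x).neg).const_mul (g 0))).sub
      ((Real.hasDerivAt_sin x).const_mul (deriv g 0)))
    have e : deriv F x - (C1 * 1 + g 0 * - -Real.sin x - deriv g 0 * Real.cos x) = 0 := by
      rw [hF1 x]; ring
    exact e ▸ h
  have hΘconst : ∀ x, Θ x = Θ 0 :=
    fun x => is_const_of_deriv_eq_zero (fun y => (hΘd y).differentiableAt)
      (fun y => (hΘd y).deriv) x 0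
  refine ⟨F 0 + g 0, C1, -(g 0), -(deriv g 0), ?_⟩
  funext x
  have := hΘconst x
  simp only [hΘ] at this
  simp [Real.sin_zero, Real.cos_zero] at this
  simp only [F4]
  linarith

def Wfun : ℝ → ℝ := fun x => 1 - Real.cos x

lemma W_deriv : deriv Wfun = Real.sin := by
  funext x
  have h := (hasDerivAt_const x (1:ℝ)).sub (Real.hasDerivAt_cos x)
  have e : 0 - -Real.sin x = Real.sin x := by ring
  exact (e ▸ h).deriv

lemma W_it1 : iteratedDeriv 1 Wfun = Real.sin := by rw [iteratedDeriv_one, W_deriv]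
lemma W_it2 : iteratedDeriv 2 Wfun = Real.cos := by
  rw [iteratedDeriv_succ, W_it1, Real.deriv_sin]
lemma W_it3 : iteratedDeriv 3 Wfun = fun x => -Real.sin x := by
  rw [iteratedDeriv_succ, W_it2]
  funext x; exact Real.deriv_cos
lemma W_it4 : iteratedDeriv 4 Wfun = fun x => -Real.cos x := by
  rw [iteratedDeriv_succ, W_it3]
  funext x
  exact ((Real.hasDerivAt_sin x).neg).deriv

lemma W_smooth : ContDiff ℝ (⊤ : ℕ∞) Wfun := contDiff_const.sub Real.contDiff_cos

lemma W_ne : Wfun ≠ 0 := by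
  intro h
  have := congrFun h Real.pi
  simp [Wfun, Real.cos_pi] at this

lemma W_ker2 : Wfun ∈ kerOp 2 ![0, 1, 0] := by
  refine ⟨W_smooth, fun x => ?_⟩
  have h3 : iteratedDeriv (2+1) Wfun x = -Real.sin x := by rw [W_it3]
  rw [h3]
  simp [Fin.sum_univ_three, iteratedDeriv_one, W_deriv, iteratedDeriv_zero, W_it2]

lemma W_ker3 : Wfun ∈ kerOp 3 ![0, 0, 1, 0] := by
  refine ⟨W_smooth, fun x => ?_⟩
  have h4 : iteratedDeriv (3+1) Wfun x = -Real.cos x := by rw [W_it4]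
  rw [h4]
  simp [Fin.sum_univ_four, iteratedDeriv_one, W_deriv, iteratedDeriv_zero, W_it2, W_it3]

lemma W_vanish2 (x : ℝ) (hx : Real.cos x = 1) (hs : Real.sin x = 0) :
    VanishAtLeast Wfun 2 x := by
  intro j hj
  interval_cases j
  · simp [iteratedDeriv_zero, Wfun, hx]
  · rw [W_it1]; exact hs

lemma W_notVanish {μ N : ℕ} {h : ℝ} (hμ : 2 ≤ μ) (hN : N ≤ 3) (hh : 2 * Real.pi ≤ h) :
    ¬ VanishAtMost Wfun μ N (Set.Icc 0 h) := by
  intro hv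
  have hpi := Real.pi_pos
  have := hv 2 ![0, 2 * Real.pi] ![2, 2]
    (by
      intro i; fin_cases i <;> simp [Set.mem_Icc] <;>
        first | linarith | (constructor <;> linarith))
    (by
      intro i j hij
      fin_cases i <;> fin_cases j <;> simp_all <;> linarith)
    (by intro i; fin_cases i <;> simp)
    (by intro i; fin_cases i <;> simpa using hμ)
    (by
      intro i; fin_cases i
      · simpa using W_vanish2 0 (by simp) (by simp)
      · simpa using W_vanish2 (2 * Real.pi) Real.cos_two_pi Real.sin_two_pi)
  rw [Fin.sum_univ_two] at this
  simp at this
  omega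

lemma sSup_char (P : ℝ → Prop)
    (hmem : ∀ h : ℝ, 0 < h → h < 2 * Real.pi → P h)
    (hub : ∀ h : ℝ, 0 < h → P h → h ≤ 2 * Real.pi) :
    sSup {l : EReal | ∃ h : ℝ, l = (h : EReal) ∧ 0 < h ∧ P h}
      = ((2 * Real.pi : ℝ) : EReal) := by
  have hpi := Real.pi_pos
  set S := {l : EReal | ∃ h : ℝ, l = (h : EReal) ∧ 0 < h ∧ P h} with hS
  apply le_antisymm
  · apply sSup_le
    rintro l ⟨h, rfl, h0, hP⟩
    exact EReal.coe_le_coe_iff.mpr (hub h h0 hP)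
  · by_contra hlt
    push_neg at hlt
    have hπS : ((Real.pi : ℝ) : EReal) ∈ S :=
      ⟨Real.pi, rfl, hpi, hmem Real.pi hpi (by linarith)⟩
    have hπle : ((Real.pi : ℝ) : EReal) ≤ sSup S := le_sSup hπS
    have hnetop : sSup S ≠ ⊤ := by
      intro he; rw [he] at hlt; exact absurd hlt (by simp)
    have hnebot : sSup S ≠ ⊥ := by
      intro he; rw [he] at hπle; exact absurd hπle (by simp)
    set t := (sSup S).toReal with ht
    have hcoe : ((t : ℝ) : EReal) = sSup S := EReal.coe_toReal hnetop hnebot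
    have ht1 : Real.pi ≤ t := EReal.coe_le_coe_iff.mp (by rw [hcoe]; exact hπle)
    have ht2 : t < 2 * Real.pi := EReal.coe_lt_coe_iff.mp (by rw [hcoe]; exact hlt)
    set u := (t + 2 * Real.pi) / 2 with hu
    have hu0 : 0 < u := by simp only [hu]; linarith
    have hu2 : u < 2 * Real.pi := by simp only [hu]; linarith
    have huS : ((u : ℝ) : EReal) ∈ S := ⟨u, rfl, hu0, hmem u hu0 hu2⟩
    have := le_sSup huS
    rw [← hcoe] at this
    have : u ≤ t := EReal.coe_le_coe_iff.mp this
    simp only [hu] at this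
    linarith

lemma EC2 (h : ℝ) (h0 : 0 < h) (h2 : h < 2 * Real.pi) :
    IsECOn 2 ![0, 1, 0] (Set.Icc 0 h) := by
  intro F hF hne
  obtain ⟨a, c, d, rfl⟩ := ker2_char F hF
  exact main3 h h0 h2 a c d hne

lemma EC3 (h : ℝ) (h0 : 0 < h) (h2 : h < 2 * Real.pi) :
    IsECOn 3 ![0, 0, 1, 0] (Set.Icc 0 h) := by
  intro F hF hne
  obtain ⟨a, b, c, d, rfl⟩ := ker3_char F hF
  exact main4 h h0 h2 a b c d hne

lemma notEC2 (h : ℝ) (hh : 2 * Real.pi ≤ h) : ¬ IsECOn 2 ![0, 1, 0] (Set.Icc 0 h) := by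
  intro hEC
  exact W_notVanish (by norm_num) (by norm_num) hh (hEC Wfun W_ker2 W_ne)

lemma notEC3 (h : ℝ) (hh : 2 * Real.pi ≤ h) : ¬ IsECOn 3 ![0, 0, 1, 0] (Set.Icc 0 h) := by
  intro hEC
  exact W_notVanish (by norm_num) (by norm_num) hh (hEC Wfun W_ker3 W_ne)

lemma F4_eq_W : F4 1 0 (-1) 0 = Wfun := by
  funext x; simp [F4, Wfun]; ring

/-- the critical lengths of `D³ + D` (kernel `1, cos, sin`) and of `D⁴ + D²`
(kernel `1, x, cos, sin`) both equal `2π`; equivalently, for `0 < h < 2π` every nonzero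
element of these kernels vanishes at most `2` (resp. `3`) times in `[0,h]` counting
multiplicities up to `3` (resp. `4`), and this fails for `h = 2π`. -/
theorem stmt8 :
    critLen 2 ![0, 1, 0] = ((2 * Real.pi : ℝ) : EReal) ∧
    critLen 3 ![0, 0, 1, 0] = ((2 * Real.pi : ℝ) : EReal) ∧
    (∀ h : ℝ, 0 < h → h < 2 * Real.pi → ∀ a b c d : ℝ,
      (fun x => a + b * x + c * Real.cos x + d * Real.sin x) ≠ 0 →
      VanishAtMost (fun x => a + b * x + c * Real.cos x + d * Real.sin x) 4 3 (Set.Icc 0 h)) ∧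
    ¬ (∀ a b c d : ℝ,
      (fun x => a + b * x + c * Real.cos x + d * Real.sin x) ≠ 0 →
      VanishAtMost (fun x => a + b * x + c * Real.cos x + d * Real.sin x) 4 3
        (Set.Icc 0 (2 * Real.pi))) ∧
    (∀ h : ℝ, 0 < h → h < 2 * Real.pi → ∀ a c d : ℝ,
      (fun x => a + c * Real.cos x + d * Real.sin x) ≠ 0 →
      VanishAtMost (fun x => a + c * Real.cos x + d * Real.sin x) 3 2 (Set.Icc 0 h)) ∧
    ¬ (∀ a c d : ℝ,
      (fun x => a + c * Real.cos x + d * Real.sin x) ≠ 0 →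
      VanishAtMost (fun x => a + c * Real.cos x + d * Real.sin x) 3 2
        (Set.Icc 0 (2 * Real.pi))) := by

  have hpi := Real.pi_pos
  refine ⟨?_, ?_, ?_, ?_, ?_, ?_⟩
  · exact sSup_char _ EC2 (fun h h0 hP => le_of_not_gt fun hgt => notEC2 h (le_of_lt hgt) hP)
  · exact sSup_char _ EC3 (fun h h0 hP => le_of_not_gt fun hgt => notEC3 h (le_of_lt hgt) hP)
  · intro h h0 h2 a b c d hne
    exact main4 h h0 h2 a b c d hne
  · intro H
    have hne : (fun x => (1:ℝ) + 0 * x + (-1) * Real.cos x + 0 * Real.sin x) ≠ 0 := by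
      have : (fun x => (1:ℝ) + 0 * x + (-1) * Real.cos x + 0 * Real.sin x) = Wfun := F4_eq_W
      rw [this]; exact W_ne
    have h2 := H 1 0 (-1) 0 hne
    rw [show (fun x => (1:ℝ) + 0 * x + (-1) * Real.cos x + 0 * Real.sin x) = Wfun from F4_eq_W]
      at h2
    exact W_notVanish (by norm_num) (by norm_num) le_rfl h2
  · intro h h0 h2 a c d hne
    exact main3 h h0 h2 a c d hne
  · intro H
    have heqW : (fun x => (1:ℝ) + (-1) * Real.cos x + 0 * Real.sin x) = Wfun := by
      funext x; simp [Wfun]; ring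
    have hne : (fun x => (1:ℝ) + (-1) * Real.cos x + 0 * Real.sin x) ≠ 0 := by
      rw [heqW]; exact W_ne
    have h2 := H 1 (-1) 0 hne
    rw [heqW] at h2
    exact W_notVanish (by norm_num) (by norm_num) le_rfl h2
end
end

section
/- Trigonometric–hyperbolic connection criterion: let 0 < T < π and H > 0, and let E be the set of C^1 functions F on [0, T+H] for which there exist reals a, b, c, d with F(x) = a·cos x + b·sin x for x ∈ [0, T] and F(x) = c·cosh(x−T) + d·sinh(x−T) for x ∈ [T, T+H]. Then E is a 2-dimensional linear space, and E is an EC-space on [0, T+H] (i.e. every nonzero F ∈ E vanishes at most once in [0, T+H] counting multiplicities up to 2) if and only if cot T + coth H > 0. -/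
open scoped BigOperators

noncomputable section

/-- `F` vanishes to order at least `m` at `x`, derivatives being taken within `J`. -/
def VanishAtLeastW (J : Set ℝ) (F : ℝ → ℝ) (m : ℕ) (x : ℝ) : Prop :=
  ∀ j < m, iteratedDerivWithin j F J x = 0

/-- `F` vanishes at most `N` times in `J`, counting multiplicities up to `μ`
(derivatives within `J`). -/
def VanishAtMostW (J : Set ℝ) (F : ℝ → ℝ) (μ N : ℕ) : Prop :=
  ∀ (r : ℕ) (xs : Fin r → ℝ) (m : Fin r → ℕ),
    (∀ i, xs i ∈ J) → Function.Injective xs →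
    (∀ i, 1 ≤ m i) → (∀ i, m i ≤ μ) →
    (∀ i, VanishAtLeastW J F (m i) (xs i)) →
    ∑ i, m i ≤ N

/-! ### Auxiliary definitions and lemmas -/

/-- The canonical piecewise trig–hyperbolic function. -/
def Gfun (T a b : ℝ) : ℝ → ℝ := fun x =>
  if x ≤ T then a * Real.cos x + b * Real.sin x
  else (a * Real.cos T + b * Real.sin T) * Real.cosh (x - T)
       + (-a * Real.sin T + b * Real.cos T) * Real.sinh (x - T)

/-- Its derivative. -/
def Gfun' (T a b : ℝ) : ℝ → ℝ := fun x =>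
  if x ≤ T then -a * Real.sin x + b * Real.cos x
  else (a * Real.cos T + b * Real.sin T) * Real.sinh (x - T)
       + (-a * Real.sin T + b * Real.cos T) * Real.cosh (x - T)

lemma hasDerivAt_trig (a b x : ℝ) :
    HasDerivAt (fun y => a * Real.cos y + b * Real.sin y)
      (-a * Real.sin x + b * Real.cos x) x := by
  have h1 := (Real.hasDerivAt_cos x).const_mul a
  have h2 := (Real.hasDerivAt_sin x).const_mul b
  exact (h1.add h2).congr_deriv (by ring)

lemma hasDerivAt_hyp (c d T x : ℝ) :
    HasDerivAt (fun y => c * Real.cosh (y - T) + d * Real.sinh (y - T))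
      (c * Real.sinh (x - T) + d * Real.cosh (x - T)) x := by
  have hid : HasDerivAt (fun y : ℝ => y - T) 1 x := (hasDerivAt_id x).sub_const T
  have h1 := hid.cosh.const_mul c
  have h2 := hid.sinh.const_mul d
  exact (h1.add h2).congr_deriv (by ring)

lemma hasDerivAt_Gfun (T a b x : ℝ) : HasDerivAt (Gfun T a b) (Gfun' T a b x) x := by
  rcases lt_trichotomy x T with h | h | h
  · have hev : Gfun T a b =ᶠ[nhds x] (fun y => a * Real.cos y + b * Real.sin y) := by
      filter_upwards [Iio_mem_nhds h] with y hy
      simp [Gfun, le_of_lt (Set.mem_Iio.1 hy)]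
    have := (hasDerivAt_trig a b x).congr_of_eventuallyEq hev
    simpa [Gfun', le_of_lt h] using this
  · subst h
    have hL : HasDerivWithinAt (Gfun x a b) (-a * Real.sin x + b * Real.cos x)
        (Set.Iic x) x := by
      refine ((hasDerivAt_trig a b x).hasDerivWithinAt).congr ?_ ?_
      · intro y hy; simp [Gfun, Set.mem_Iic.1 hy]
      · simp [Gfun]
    have hR : HasDerivWithinAt (Gfun x a b) (-a * Real.sin x + b * Real.cos x)
        (Set.Ici x) x := by
      have h0 := (hasDerivAt_hyp (a * Real.cos x + b * Real.sin x)
        (-a * Real.sin x + b * Real.cos x) x x).hasDerivWithinAt (s := Set.Ici x)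
      have h0' : HasDerivWithinAt
          (fun y => (a * Real.cos x + b * Real.sin x) * Real.cosh (y - x)
            + (-a * Real.sin x + b * Real.cos x) * Real.sinh (y - x))
          (-a * Real.sin x + b * Real.cos x) (Set.Ici x) x := by
        simpa using h0
      refine h0'.congr ?_ ?_
      · intro y hy
        rcases eq_or_lt_of_le (Set.mem_Ici.1 hy) with rfl | hlt
        · simp [Gfun]
        · simp [Gfun, not_le.2 hlt]
      · simp [Gfun]
    have := hL.union hR
    rw [Set.Iic_union_Ici, hasDerivWithinAt_univ] at this
    simpa [Gfun'] using this
  · have hev : Gfun T a b =ᶠ[nhds x]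
        (fun y => (a * Real.cos T + b * Real.sin T) * Real.cosh (y - T)
          + (-a * Real.sin T + b * Real.cos T) * Real.sinh (y - T)) := by
      filter_upwards [Ioi_mem_nhds h] with y hy
      simp [Gfun, not_le.2 (Set.mem_Ioi.1 hy)]
    have := (hasDerivAt_hyp (a * Real.cos T + b * Real.sin T)
      (-a * Real.sin T + b * Real.cos T) T x).congr_of_eventuallyEq hev
    simpa [Gfun', not_le.2 h] using this

lemma continuous_Gfun' (T a b : ℝ) : Continuous (Gfun' T a b) := by
  unfold Gfun'
  apply Continuous.if_le
  · fun_prop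
  · fun_prop
  · exact continuous_id
  · exact continuous_const
  · intro y hy
    subst hy
    simp

lemma contDiff_Gfun (T a b : ℝ) : ContDiff ℝ 1 (Gfun T a b) := by
  rw [contDiff_one_iff_deriv]
  constructor
  · exact fun x => (hasDerivAt_Gfun T a b x).differentiableAt
  · have hd : deriv (Gfun T a b) = Gfun' T a b :=
      funext fun x => (hasDerivAt_Gfun T a b x).deriv
    rw [hd]
    exact continuous_Gfun' T a b

/-- Derivative within the big interval, computed on the trig part. -/
lemma derivWithin_eq_left {T H a b : ℝ} (hT : 0 < T) (hH : 0 < H) {F : ℝ → ℝ}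
    (hF : ContDiffOn ℝ 1 F (Set.Icc 0 (T + H)))
    (htrig : ∀ x ∈ Set.Icc (0 : ℝ) T, F x = a * Real.cos x + b * Real.sin x)
    {x : ℝ} (hx : x ∈ Set.Icc (0 : ℝ) T) :
    derivWithin F (Set.Icc 0 (T + H)) x = -a * Real.sin x + b * Real.cos x := by
  have hsub : Set.Icc (0 : ℝ) T ⊆ Set.Icc 0 (T + H) :=
    Set.Icc_subset_Icc le_rfl (by linarith)
  have hud : UniqueDiffWithinAt ℝ (Set.Icc (0 : ℝ) T) x := (uniqueDiffOn_Icc hT) x hx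
  have hdiff : DifferentiableWithinAt ℝ F (Set.Icc 0 (T + H)) x :=
    hF.differentiableOn one_ne_zero x (hsub hx)
  rw [← derivWithin_subset hsub hud hdiff, derivWithin_congr htrig (htrig x hx)]
  exact (hasDerivAt_trig a b x).hasDerivWithinAt.derivWithin hud

/-- Derivative within the big interval, computed on the hyperbolic part. -/
lemma derivWithin_eq_right {T H c d : ℝ} (hT : 0 < T) (hH : 0 < H) {F : ℝ → ℝ}
    (hF : ContDiffOn ℝ 1 F (Set.Icc 0 (T + H)))
    (hhyp : ∀ x ∈ Set.Icc T (T + H), F x = c * Real.cosh (x - T) + d * Real.sinh (x - T))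
    {x : ℝ} (hx : x ∈ Set.Icc T (T + H)) :
    derivWithin F (Set.Icc 0 (T + H)) x
      = c * Real.sinh (x - T) + d * Real.cosh (x - T) := by
  have hsub : Set.Icc T (T + H) ⊆ Set.Icc 0 (T + H) :=
    Set.Icc_subset_Icc (le_of_lt hT) le_rfl
  have hud : UniqueDiffWithinAt ℝ (Set.Icc T (T + H)) x :=
    (uniqueDiffOn_Icc (by linarith : T < T + H)) x hx
  have hdiff : DifferentiableWithinAt ℝ F (Set.Icc 0 (T + H)) x :=
    hF.differentiableOn one_ne_zero x (hsub hx)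
  rw [← derivWithin_subset hsub hud hdiff, derivWithin_congr hhyp (hhyp x hx)]
  exact (hasDerivAt_hyp c d T x).hasDerivWithinAt.derivWithin hud

/-- Matching conditions at `T` forced by the `C¹` hypothesis. -/
lemma matching {T H a b c d : ℝ} (hT : 0 < T) (hH : 0 < H) {F : ℝ → ℝ}
    (hF : ContDiffOn ℝ 1 F (Set.Icc 0 (T + H)))
    (htrig : ∀ x ∈ Set.Icc (0 : ℝ) T, F x = a * Real.cos x + b * Real.sin x)
    (hhyp : ∀ x ∈ Set.Icc T (T + H), F x = c * Real.cosh (x - T) + d * Real.sinh (x - T)) :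
    c = a * Real.cos T + b * Real.sin T ∧ d = -a * Real.sin T + b * Real.cos T := by
  constructor
  · have h1 := htrig T ⟨le_of_lt hT, le_rfl⟩
    have h2 := hhyp T ⟨le_rfl, by linarith⟩
    simp only [sub_self, Real.cosh_zero, Real.sinh_zero, mul_one, mul_zero, add_zero] at h2
    rw [h1] at h2
    linarith
  · have h1 := derivWithin_eq_left hT hH hF htrig ⟨le_of_lt hT, le_rfl⟩
    have h2 := derivWithin_eq_right hT hH hF hhyp ⟨le_rfl, by linarith⟩
    simp only [sub_self, Real.cosh_zero, Real.sinh_zero, mul_one, mul_zero, zero_add] at h2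
    rw [h1] at h2
    linarith

/-- Double trig zero forces `a = b = 0`. -/
lemma trig_double {a b x : ℝ} (e1 : a * Real.cos x + b * Real.sin x = 0)
    (e2 : -a * Real.sin x + b * Real.cos x = 0) : a = 0 ∧ b = 0 := by
  constructor
  · linear_combination Real.cos x * e1 - Real.sin x * e2 - a * Real.sin_sq_add_cos_sq x
  · linear_combination Real.sin x * e1 + Real.cos x * e2 - b * Real.sin_sq_add_cos_sq x

/-- Double hyperbolic zero forces `c = d = 0`. -/
lemma hyp_double {c d s : ℝ} (e1 : c * Real.cosh s + d * Real.sinh s = 0)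
    (e2 : c * Real.sinh s + d * Real.cosh s = 0) : c = 0 ∧ d = 0 := by
  constructor
  · linear_combination Real.cosh s * e1 - Real.sinh s * e2 - c * Real.cosh_sq_sub_sinh_sq s
  · linear_combination Real.cosh s * e2 - Real.sinh s * e1 - d * Real.cosh_sq_sub_sinh_sq s

/-- Two distinct trig zeros in a window shorter than `π` force `a = b = 0`. -/
lemma trig_two {a b x y : ℝ} (hxy : x < y) (hlt : y - x < Real.pi)
    (e1 : a * Real.cos x + b * Real.sin x = 0)
    (e2 : a * Real.cos y + b * Real.sin y = 0) : a = 0 ∧ b = 0 := by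
  have hs : 0 < Real.sin (y - x) :=
    Real.sin_pos_of_pos_of_lt_pi (by linarith) hlt
  rw [Real.sin_sub] at hs
  have ha : a * (Real.sin y * Real.cos x - Real.cos y * Real.sin x) = 0 := by
    linear_combination Real.sin y * e1 - Real.sin x * e2
  have hb : b * (Real.sin y * Real.cos x - Real.cos y * Real.sin x) = 0 := by
    linear_combination Real.cos x * e2 - Real.cos y * e1
  constructor
  · rcases mul_eq_zero.1 ha with h | h
    · exact h
    · exact absurd h (ne_of_gt hs)
  · rcases mul_eq_zero.1 hb with h | h
    · exact h
    · exact absurd h (ne_of_gt hs)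

/-- Two distinct hyperbolic zeros force `c = d = 0`. -/
lemma hyp_two {c d s t : ℝ} (hst : s < t)
    (e1 : c * Real.cosh s + d * Real.sinh s = 0)
    (e2 : c * Real.cosh t + d * Real.sinh t = 0) : c = 0 ∧ d = 0 := by
  have hs : 0 < Real.sinh (t - s) := Real.sinh_pos_iff.2 (by linarith)
  rw [Real.sinh_sub] at hs
  have hc : c * (Real.sinh t * Real.cosh s - Real.cosh t * Real.sinh s) = 0 := by
    linear_combination Real.sinh t * e1 - Real.sinh s * e2
  have hd : d * (Real.sinh t * Real.cosh s - Real.cosh t * Real.sinh s) = 0 := by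
    linear_combination Real.cosh s * e2 - Real.cosh t * e1
  constructor
  · rcases mul_eq_zero.1 hc with h | h
    · exact h
    · exact absurd h (ne_of_gt hs)
  · rcases mul_eq_zero.1 hd with h | h
    · exact h
    · exact absurd h (ne_of_gt hs)

/-- The mixed case: a trig zero at `x < T` and a hyperbolic zero at `T + s`
force `a = b = 0`, given the connection condition. -/
lemma mixed {T H x s a b : ℝ} (hT : 0 < T) (hTpi : T < Real.pi) (hH : 0 < H)
    (hx0 : 0 ≤ x) (hxT : x < T) (hs0 : 0 < s) (hsH : s ≤ H)
    (hpos : 0 < Real.cos T / Real.sin T + Real.cosh H / Real.sinh H)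
    (e1 : a * Real.cos x + b * Real.sin x = 0)
    (e2 : (a * Real.cos T + b * Real.sin T) * Real.cosh s
        + (-a * Real.sin T + b * Real.cos T) * Real.sinh s = 0) :
    a = 0 ∧ b = 0 := by
  have hsinT : 0 < Real.sin T := Real.sin_pos_of_pos_of_lt_pi hT hTpi
  have hsinhH : 0 < Real.sinh H := Real.sinh_pos_iff.2 hH
  have hsinhs : 0 < Real.sinh s := Real.sinh_pos_iff.2 hs0
  have hC : 0 < Real.cos T * Real.sinh H + Real.cosh H * Real.sin T := by
    have h2 := mul_pos hpos (mul_pos hsinT hsinhH)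
    have h3 : (Real.cos T / Real.sin T + Real.cosh H / Real.sinh H)
        * (Real.sin T * Real.sinh H)
        = Real.cos T * Real.sinh H + Real.cosh H * Real.sin T := by
      field_simp
      try ring
    rw [h3] at h2
    linarith
  have hA : Real.cosh H * Real.sinh s ≤ Real.cosh s * Real.sinh H := by
    have h := Real.sinh_nonneg_iff.2 (by linarith : (0:ℝ) ≤ H - s)
    rw [Real.sinh_sub] at h
    linarith
  have hsinu : 0 < Real.sin (T - x) :=
    Real.sin_pos_of_pos_of_lt_pi (by linarith) (by linarith)
  have hB : Real.cos T * Real.sin (T - x) ≤ Real.cos (T - x) * Real.sin T := by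
    have h : 0 ≤ Real.sin x := Real.sin_nonneg_of_nonneg_of_le_pi hx0 (by linarith)
    rw [Real.sin_sub, Real.cos_sub]
    nlinarith [Real.sin_sq_add_cos_sq T]
  have hΔ : 0 < Real.cosh s * Real.sin (T - x) + Real.sinh s * Real.cos (T - x) := by
    have k1 : Real.cosh H * Real.sinh s * Real.sin (T - x)
        ≤ Real.cosh s * Real.sinh H * Real.sin (T - x) :=
      mul_le_mul_of_nonneg_right hA hsinu.le
    have k2 : Real.cos T * Real.sin (T - x) * Real.sinh s
        ≤ Real.cos (T - x) * Real.sin T * Real.sinh s :=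
      mul_le_mul_of_nonneg_right hB hsinhs.le
    have k3 : 0 < (Real.cos T * Real.sinh H + Real.cosh H * Real.sin T)
        * (Real.sin (T - x) * Real.sinh s) := mul_pos hC (mul_pos hsinu hsinhs)
    nlinarith [mul_le_mul_of_nonneg_left k1 hsinT.le,
      mul_le_mul_of_nonneg_left k2 hsinhH.le, k3, mul_pos hsinT hsinhH]
  have ha : a * (Real.cosh s * Real.sin (T - x) + Real.sinh s * Real.cos (T - x)) = 0 := by
    rw [Real.sin_sub, Real.cos_sub]
    linear_combination (Real.sin T * Real.cosh s + Real.cos T * Real.sinh s) * e1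
      - Real.sin x * e2
  have hb : b * (Real.cosh s * Real.sin (T - x) + Real.sinh s * Real.cos (T - x)) = 0 := by
    rw [Real.sin_sub, Real.cos_sub]
    linear_combination Real.cos x * e2
      - (Real.cos T * Real.cosh s - Real.sin T * Real.sinh s) * e1
  constructor
  · rcases mul_eq_zero.1 ha with h | h
    · exact h
    · exact absurd h (ne_of_gt hΔ)
  · rcases mul_eq_zero.1 hb with h | h
    · exact h
    · exact absurd h (ne_of_gt hΔ)

/-- Two distinct zeros of `Gfun T a b` in `[0, T+H]` force `a = b = 0`
(given the connection condition). -/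
lemma gfun_two_zeros_aux {T H a b x y : ℝ} (hT : 0 < T) (hTpi : T < Real.pi) (hH : 0 < H)
    (hpos : 0 < Real.cos T / Real.sin T + Real.cosh H / Real.sinh H)
    (hx : x ∈ Set.Icc (0 : ℝ) (T + H)) (hy : y ∈ Set.Icc (0 : ℝ) (T + H)) (hxy : x < y)
    (h1 : Gfun T a b x = 0) (h2 : Gfun T a b y = 0) : a = 0 ∧ b = 0 := by
  obtain ⟨hx0, hxTH⟩ := hx
  obtain ⟨hy0, hyTH⟩ := hy
  by_cases hyT : y ≤ T
  · -- both trig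
    have e1 : a * Real.cos x + b * Real.sin x = 0 := by
      simpa [Gfun, le_trans hxy.le hyT] using h1
    have e2 : a * Real.cos y + b * Real.sin y = 0 := by
      simpa [Gfun, hyT] using h2
    exact trig_two hxy (by linarith) e1 e2
  · push_neg at hyT
    by_cases hxT : x ≤ T
    · by_cases hxT' : x < T
      · -- mixed case
        have e1 : a * Real.cos x + b * Real.sin x = 0 := by
          simpa [Gfun, hxT] using h1
        have e2 : (a * Real.cos T + b * Real.sin T) * Real.cosh (y - T)
            + (-a * Real.sin T + b * Real.cos T) * Real.sinh (y - T) = 0 := by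
          simpa [Gfun, not_le.2 hyT] using h2
        exact mixed hT hTpi hH hx0 hxT' (by linarith) (by linarith) hpos e1 e2
      · -- x = T : both points are hyperbolic zeros (at s = 0 and s = y - T)
        have hxeq : x = T := le_antisymm hxT (not_lt.1 hxT')
        subst hxeq
        have e1 : (a * Real.cos x + b * Real.sin x) * Real.cosh 0
            + (-a * Real.sin x + b * Real.cos x) * Real.sinh 0 = 0 := by
          simp only [Real.cosh_zero, Real.sinh_zero, mul_one, mul_zero, add_zero]
          simpa [Gfun] using h1
        have e2 : (a * Real.cos x + b * Real.sin x) * Real.cosh (y - x)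
            + (-a * Real.sin x + b * Real.cos x) * Real.sinh (y - x) = 0 := by
          simpa [Gfun, not_le.2 hyT] using h2
        have hcd := hyp_two (by linarith : (0:ℝ) < y - x) e1 e2
        exact trig_double hcd.1 hcd.2
    · -- both hyperbolic, T < x < y
      push_neg at hxT
      have e1 : (a * Real.cos T + b * Real.sin T) * Real.cosh (x - T)
          + (-a * Real.sin T + b * Real.cos T) * Real.sinh (x - T) = 0 := by
        simpa [Gfun, not_le.2 hxT] using h1
      have e2 : (a * Real.cos T + b * Real.sin T) * Real.cosh (y - T)
          + (-a * Real.sin T + b * Real.cos T) * Real.sinh (y - T) = 0 := by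
        simpa [Gfun, not_le.2 hyT] using h2
      have hcd := hyp_two (by linarith : x - T < y - T) e1 e2
      exact trig_double hcd.1 hcd.2

lemma gfun_two_zeros {T H a b x y : ℝ} (hT : 0 < T) (hTpi : T < Real.pi) (hH : 0 < H)
    (hpos : 0 < Real.cos T / Real.sin T + Real.cosh H / Real.sinh H)
    (hx : x ∈ Set.Icc (0 : ℝ) (T + H)) (hy : y ∈ Set.Icc (0 : ℝ) (T + H)) (hxy : x ≠ y)
    (h1 : Gfun T a b x = 0) (h2 : Gfun T a b y = 0) : a = 0 ∧ b = 0 := by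
  rcases hxy.lt_or_gt with h | h
  · exact gfun_two_zeros_aux hT hTpi hH hpos hx hy h h1 h2
  · exact gfun_two_zeros_aux hT hTpi hH hpos hy hx h h2 h1

/-- The linear parametrization of the restricted space. -/
def Lmap (T H : ℝ) : (ℝ × ℝ) →ₗ[ℝ] (↥(Set.Icc (0 : ℝ) (T + H)) → ℝ) where
  toFun p := (Set.Icc (0 : ℝ) (T + H)).restrict (Gfun T p.1 p.2)
  map_add' p q := by
    funext x
    show Gfun T (p.1 + q.1) (p.2 + q.2) x = Gfun T p.1 p.2 x + Gfun T q.1 q.2 x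
    simp only [Gfun]
    split_ifs <;> ring
  map_smul' r p := by
    funext x
    show Gfun T (r * p.1) (r * p.2) x = r * Gfun T p.1 p.2 x
    simp only [Gfun]
    split_ifs <;> ring

lemma Gfun_mem {T H : ℝ} (hT : 0 < T) (_hH : 0 < H) (a b : ℝ) :
    Gfun T a b ∈ {F : ℝ → ℝ | ContDiffOn ℝ 1 F (Set.Icc 0 (T + H)) ∧
      ∃ a' b' c d : ℝ,
        (∀ x ∈ Set.Icc (0 : ℝ) T, F x = a' * Real.cos x + b' * Real.sin x) ∧
        (∀ x ∈ Set.Icc T (T + H), F x = c * Real.cosh (x - T) + d * Real.sinh (x - T))} := by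
  refine ⟨(contDiff_Gfun T a b).contDiffOn, a, b,
    a * Real.cos T + b * Real.sin T, -a * Real.sin T + b * Real.cos T, ?_, ?_⟩
  · intro x hx
    simp [Gfun, hx.2]
  · intro x hx
    by_cases hxT : x ≤ T
    · have hxeq : x = T := le_antisymm hxT hx.1
      subst hxeq
      simp [Gfun]
    · simp [Gfun, hxT]

/-- trigonometric–hyperbolic connection criterion. For `0 < T < π`, `H > 0`,
the space `E` of `C¹` functions on `[0, T+H]` equal to `a cos x + b sin x` on `[0,T]` and to
`c cosh(x-T) + d sinh(x-T)` on `[T, T+H]` is a 2-dimensional linear space, and `E` is an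
EC-space on `[0, T+H]` if and only if `cot T + coth H > 0`. -/
theorem stmt10 (T H : ℝ) (hT : 0 < T) (hTpi : T < Real.pi) (hH : 0 < H)
    (E : Set (ℝ → ℝ))
    (hE : E = {F : ℝ → ℝ | ContDiffOn ℝ 1 F (Set.Icc 0 (T + H)) ∧
      ∃ a b c d : ℝ,
        (∀ x ∈ Set.Icc (0 : ℝ) T, F x = a * Real.cos x + b * Real.sin x) ∧
        (∀ x ∈ Set.Icc T (T + H), F x = c * Real.cosh (x - T) + d * Real.sinh (x - T))}) :
    (∃ V : Submodule ℝ (↥(Set.Icc (0 : ℝ) (T + H)) → ℝ),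
        (V : Set (↥(Set.Icc (0 : ℝ) (T + H)) → ℝ)) =
          (fun F => (Set.Icc (0 : ℝ) (T + H)).restrict F) '' E ∧
        Module.finrank ℝ V = 2) ∧
    ((∀ F ∈ E, ¬(∀ x ∈ Set.Icc (0 : ℝ) (T + H), F x = 0) →
        VanishAtMostW (Set.Icc (0 : ℝ) (T + H)) F 2 1) ↔
      0 < Real.cos T / Real.sin T + Real.cosh H / Real.sinh H) := by
  subst hE
  have hsinT : 0 < Real.sin T := Real.sin_pos_of_pos_of_lt_pi hT hTpi
  have hsinhH : 0 < Real.sinh H := Real.sinh_pos_iff.2 hH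
  have hTH : (0 : ℝ) < T + H := by linarith
  have hmemT : T ∈ Set.Icc (0 : ℝ) (T + H) := ⟨hT.le, by linarith⟩
  have hmem0 : (0 : ℝ) ∈ Set.Icc (0 : ℝ) (T + H) := ⟨le_rfl, hTH.le⟩
  -- F ∈ E is equal to a Gfun on the interval:
  have hchar : ∀ F : ℝ → ℝ, ContDiffOn ℝ 1 F (Set.Icc 0 (T + H)) →
      ∀ a b c d : ℝ,
      (∀ x ∈ Set.Icc (0 : ℝ) T, F x = a * Real.cos x + b * Real.sin x) →
      (∀ x ∈ Set.Icc T (T + H), F x = c * Real.cosh (x - T) + d * Real.sinh (x - T)) →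
      ∀ x ∈ Set.Icc (0 : ℝ) (T + H), F x = Gfun T a b x := by
    intro F hF a b c d htrig hhyp x hx
    obtain ⟨hc, hd⟩ := matching hT hH hF htrig hhyp
    by_cases hxT : x ≤ T
    · rw [htrig x ⟨hx.1, hxT⟩]
      simp [Gfun, hxT]
    · rw [hhyp x ⟨(not_le.1 hxT).le, hx.2⟩, hc, hd]
      simp [Gfun, hxT]
  constructor
  · -- dimension part
    refine ⟨LinearMap.range (Lmap T H), ?_, ?_⟩
    · ext g
      simp only [LinearMap.mem_range, SetLike.mem_coe, Set.mem_image]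
      constructor
      · rintro ⟨⟨a, b⟩, rfl⟩
        exact ⟨Gfun T a b, Gfun_mem hT hH a b, rfl⟩
      · rintro ⟨F, ⟨hF, a, b, c, d, htrig, hhyp⟩, rfl⟩
        refine ⟨(a, b), ?_⟩
        funext x
        simp only [Lmap, LinearMap.coe_mk, AddHom.coe_mk, Set.restrict_apply]
        exact (hchar F hF a b c d htrig hhyp x.1 x.2).symm
    · have hinj : Function.Injective (Lmap T H) := by
        intro p q hpq
        have h0 := congrFun hpq ⟨0, hmem0⟩
        have hTT := congrFun hpq ⟨T, hmemT⟩
        simp only [Lmap, LinearMap.coe_mk, AddHom.coe_mk, Set.restrict_apply] at h0 hTT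
        have h0' : p.1 = q.1 := by
          simpa [Gfun, hT.le, Set.restrict] using h0
        have hT' : p.1 * Real.cos T + p.2 * Real.sin T
            = q.1 * Real.cos T + q.2 * Real.sin T := by
          simpa [Gfun, Set.restrict] using hTT
        have h2 : p.2 = q.2 := by
          have : p.2 * Real.sin T = q.2 * Real.sin T := by
            rw [h0'] at hT'
            linarith
          exact mul_right_cancel₀ (ne_of_gt hsinT) this
        exact Prod.ext h0' h2
      rw [LinearMap.finrank_range_of_inj hinj]
      simp [Module.finrank_prod]
  · constructor
    · -- EC ⟹ positivity, by contraposition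
      intro hEC
      by_contra hle
      push_neg at hle
      -- counterexample: F = Gfun T 0 1
      have hFE := Gfun_mem (T := T) (H := H) hT hH 0 1
      have hne : ¬(∀ x ∈ Set.Icc (0 : ℝ) (T + H), Gfun T 0 1 x = 0) := by
        intro hall
        have h := hall (T / 2) ⟨by linarith, by linarith⟩
        have : Real.sin (T / 2) = 0 := by
          simpa [Gfun, (by linarith : T / 2 ≤ T)] using h
        have := Real.sin_pos_of_pos_of_lt_pi (by linarith : (0:ℝ) < T / 2)
          (by linarith : T / 2 < Real.pi)
        linarith
      -- find the second zero
      have hφH : Real.sin T * Real.cosh H + Real.cos T * Real.sinh H ≤ 0 := by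
        have h2 : (Real.cos T / Real.sin T + Real.cosh H / Real.sinh H)
            * (Real.sin T * Real.sinh H) ≤ 0 :=
          mul_nonpos_of_nonpos_of_nonneg hle (mul_pos hsinT hsinhH).le
        have h3 : (Real.cos T / Real.sin T + Real.cosh H / Real.sinh H)
            * (Real.sin T * Real.sinh H)
            = Real.cos T * Real.sinh H + Real.cosh H * Real.sin T := by
          field_simp
          try ring
        rw [h3] at h2
        nlinarith [Real.cosh_pos H, Real.sinh_pos_iff.2 hH]
      have hcont : ContinuousOn
          (fun s => Real.sin T * Real.cosh s + Real.cos T * Real.sinh s)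
          (Set.Icc 0 H) := by fun_prop
      have hiv := intermediate_value_Icc' hH.le hcont
      have h0mem : (0 : ℝ) ∈ Set.Icc
          (Real.sin T * Real.cosh H + Real.cos T * Real.sinh H)
          (Real.sin T * Real.cosh 0 + Real.cos T * Real.sinh 0) := by
        simp only [Real.cosh_zero, Real.sinh_zero, mul_one, mul_zero, add_zero]
        exact ⟨hφH, hsinT.le⟩
      obtain ⟨s, hs, hφs⟩ := hiv h0mem
      have hφs' : Real.sin T * Real.cosh s + Real.cos T * Real.sinh s = 0 := hφs
      obtain ⟨hs1, hs2⟩ := hs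
      have hs0 : 0 < s := by
        rcases hs1.lt_or_eq with h | h
        · exact h
        · exfalso
          rw [← h] at hφs
          simp only [Real.cosh_zero, Real.sinh_zero, mul_one, mul_zero, add_zero] at hφs
          linarith
      -- apply the EC property with two simple zeros 0 and T + s
      have hvan : ∀ i : Fin 2, VanishAtLeastW (Set.Icc (0 : ℝ) (T + H)) (Gfun T 0 1)
          ((fun _ : Fin 2 => 1) i) (![0, T + s] i) := by
        intro i j hj
        have hj0 : j = 0 := Nat.lt_one_iff.mp hj
        subst hj0
        rw [iteratedDerivWithin_zero]
        fin_cases i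
        · simp only [Fin.mk_zero, Fin.mk_one, Matrix.cons_val_zero]
          simp [Gfun, hT.le]
        · simp only [Fin.mk_zero, Fin.mk_one, Matrix.cons_val_one, Matrix.head_cons]
          show Gfun T 0 1 (T + s) = 0
          have hns : ¬ (T + s ≤ T) := by linarith
          simp only [Gfun, hns, if_false]
          have hss : T + s - T = s := by ring
          rw [hss]
          linear_combination hφs'
      have hmemxs : ∀ i : Fin 2, ![0, T + s] i ∈ Set.Icc (0 : ℝ) (T + H) := by
        intro i
        fin_cases i
        · simp only [Fin.mk_zero, Fin.mk_one, Matrix.cons_val_zero]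
          exact hmem0
        · simp only [Fin.mk_zero, Fin.mk_one, Matrix.cons_val_one, Matrix.head_cons, Matrix.cons_val_zero]
          exact ⟨by linarith, by linarith⟩
      have hinj2 : Function.Injective ![(0 : ℝ), T + s] := by
        intro i j hij
        fin_cases i <;> fin_cases j <;>
          simp only [Fin.mk_zero, Fin.mk_one, Matrix.cons_val_zero, Matrix.cons_val_one, Matrix.head_cons] at hij <;>
          first
          | rfl
          | (exfalso; linarith)
      have hle2 := hEC (Gfun T 0 1) hFE hne 2 ![0, T + s] (fun _ => 1)
        hmemxs hinj2 (fun _ => le_rfl) (fun _ => one_le_two) hvan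
      simp at hle2
    · -- positivity ⟹ EC
      intro hpos F hFE hne
      obtain ⟨hF, a, b, c, d, htrig, hhyp⟩ := hFE
      have hFG : ∀ x ∈ Set.Icc (0 : ℝ) (T + H), F x = Gfun T a b x :=
        hchar F hF a b c d htrig hhyp
      obtain ⟨hc, hd⟩ := matching hT hH hF htrig hhyp
      have hab : ¬(a = 0 ∧ b = 0) := by
        rintro ⟨rfl, rfl⟩
        apply hne
        intro x hx
        rw [hFG x hx]
        simp [Gfun]
      intro r xs m hmemxs hinj hm1 hm2 hvan
      have hzero : ∀ i, F (xs i) = 0 := by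
        intro i
        have := hvan i 0 (lt_of_lt_of_le Nat.zero_lt_one (hm1 i))
        simpa [iteratedDerivWithin_zero] using this
      have hm1' : ∀ i, m i = 1 := by
        intro i
        by_contra hmi
        have hmi2 : m i = 2 := by have h1 := hm1 i; have h2 := hm2 i; omega
        have hz : F (xs i) = 0 := hzero i
        have hud : UniqueDiffWithinAt ℝ (Set.Icc (0 : ℝ) (T + H)) (xs i) :=
          (uniqueDiffOn_Icc hTH) _ (hmemxs i)
        have hd1 : derivWithin F (Set.Icc 0 (T + H)) (xs i) = 0 := by
          have := hvan i 1 (by omega : 1 < m i)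
          rwa [iteratedDerivWithin_one] at this
        apply hab
        rcases le_total (xs i) T with hle | hge
        · have e1 : a * Real.cos (xs i) + b * Real.sin (xs i) = 0 := by
            rw [← htrig (xs i) ⟨(hmemxs i).1, hle⟩]; exact hz
          have e2 : -a * Real.sin (xs i) + b * Real.cos (xs i) = 0 := by
            rw [← derivWithin_eq_left hT hH hF htrig ⟨(hmemxs i).1, hle⟩]; exact hd1
          exact trig_double e1 e2
        · have e1 : c * Real.cosh (xs i - T) + d * Real.sinh (xs i - T) = 0 := by
            rw [← hhyp (xs i) ⟨hge, (hmemxs i).2⟩]; exact hz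
          have e2 : c * Real.sinh (xs i - T) + d * Real.cosh (xs i - T) = 0 := by
            rw [← derivWithin_eq_right hT hH hF hhyp ⟨hge, (hmemxs i).2⟩]; exact hd1
          have hcd := hyp_double e1 e2
          have e1' : a * Real.cos T + b * Real.sin T = 0 := by rw [← hc]; exact hcd.1
          have e2' : -a * Real.sin T + b * Real.cos T = 0 := by rw [← hd]; exact hcd.2
          exact trig_double e1' e2'
      have hr : r ≤ 1 := by
        by_contra h
        push_neg at h
        have h2 : 2 ≤ r := h
        set i0 : Fin r := ⟨0, by omega⟩
        set i1 : Fin r := ⟨1, by omega⟩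
        have hne01 : xs i0 ≠ xs i1 := by
          intro he
          have := hinj he
          simp [i0, i1, Fin.ext_iff] at this
        apply hab
        exact gfun_two_zeros hT hTpi hH hpos (hmemxs i0) (hmemxs i1) hne01
          ((hFG _ (hmemxs i0)) ▸ hzero i0)
          ((hFG _ (hmemxs i1)) ▸ hzero i1)
      calc ∑ i, m i = ∑ _i : Fin r, 1 := by
            apply Finset.sum_congr rfl
            intro i _
            exact hm1' i
        _ = r := by simp
        _ ≤ 1 := hr
end
end

section
/- For every n ≥ 1, the 2n-dimensional space E spanned by cos x, sin x, cos 2x, sin 2x, …, cos nx, sin nx has critical length π: for every 0 < h < π, every nonzero F ∈ E vanishes at most 2n−1 times in [0,h] counting multiplicities up to 2n, and E is not an EC-space on [0, π] (there exists a nonzero F ∈ E vanishing at least 2n times in [0, π] counting multiplicities up to 2n). -/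
open scoped BigOperators

noncomputable section

open Polynomial Complex



theorem contDiff_iteratedDeriv_top {F : ℝ → ℝ} (hF : ContDiff ℝ (⊤:ℕ∞) F) (j : ℕ) :
    ContDiff ℝ (⊤:ℕ∞) (iteratedDeriv j F) := by
  induction j with
  | zero => simpa [iteratedDeriv_zero] using hF
  | succ j ih =>
    rw [iteratedDeriv_succ]
    exact (contDiff_infty_iff_deriv.mp ih).2

theorem iteratedDeriv_ofReal' (F : ℝ → ℝ) (hF : ContDiff ℝ (⊤:ℕ∞) F) (j : ℕ) :
    iteratedDeriv j (fun y : ℝ => ((F y : ℝ) : ℂ)) = fun y => ((iteratedDeriv j F y : ℝ) : ℂ) := by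
  induction j with
  | zero => simp [iteratedDeriv_zero]
  | succ j ih =>
    rw [iteratedDeriv_succ, iteratedDeriv_succ, ih]
    funext x
    have hd : DifferentiableAt ℝ (iteratedDeriv j F) x :=
      ((contDiff_iteratedDeriv_top hF j).differentiable (by norm_num)).differentiableAt
    exact (hd.hasDerivAt.ofReal_comp).deriv


theorem hasDerivAt_cpow_comp {f : ℝ → ℂ} {f' : ℂ} {x : ℝ} (h : HasDerivAt f f' x) (n : ℕ) :
    HasDerivAt (fun y => f y ^ n) ((n : ℂ) * f x ^ (n - 1) * f') x := by
  induction n with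
  | zero => simpa using hasDerivAt_const x (1 : ℂ)
  | succ n ih =>
    have := ih.mul h
    have heq : (n : ℂ) * f x ^ (n - 1) * f' * f x + f x ^ n * f'
        = ((n + 1 : ℕ) : ℂ) * f x ^ (n + 1 - 1) * f' := by
      cases n with
      | zero => simp
      | succ m =>
        simp only [Nat.add_sub_cancel]
        push_cast
        rw [show f x ^ (m + 1) = f x ^ m * f x from pow_succ _ _]
        ring
    rw [heq] at this
    simpa [pow_succ, Pi.mul_def] using this

theorem vorder_core (s g : ℝ → ℂ) (hs : ContDiff ℝ (⊤:ℕ∞) s) (hg : ContDiff ℝ (⊤:ℕ∞) g)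
    (x₀ : ℝ) (hs0 : s x₀ = 0) (p : ℕ) :
    ∀ j, j ≤ p → ∃ gj : ℝ → ℂ, ContDiff ℝ (⊤:ℕ∞) gj ∧
      iteratedDeriv j (fun x => s x ^ p * g x) = (fun x => s x ^ (p - j) * gj x) ∧
      gj x₀ = (p.descFactorial j : ℂ) * (deriv s x₀) ^ j * g x₀ := by
  intro j
  induction j with
  | zero =>
    intro _
    exact ⟨g, hg, by simp [iteratedDeriv_zero], by simp⟩
  | succ j ih =>
    intro hj
    obtain ⟨gj, hgj, hiter, hval⟩ := ih (Nat.le_of_succ_le hj)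
    have hk : 1 ≤ p - j := by omega
    have hds : ContDiff ℝ (⊤:ℕ∞) (deriv s) := (contDiff_infty_iff_deriv.mp hs).2
    have hdgj : ContDiff ℝ (⊤:ℕ∞) (deriv gj) := (contDiff_infty_iff_deriv.mp hgj).2
    refine ⟨fun x => ((p - j : ℕ) : ℂ) * deriv s x * gj x + s x * deriv gj x,
      ((contDiff_const.mul hds).mul hgj).add (hs.mul hdgj), ?_, ?_⟩
    · rw [iteratedDeriv_succ, hiter]
      funext x
      have h1 := hasDerivAt_cpow_comp (((hs.differentiable (by norm_num)).differentiableAt (x := x)).hasDerivAt) (p - j)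
      have h2 : HasDerivAt gj (deriv gj x) x :=
        (hgj.differentiable (by norm_num)).differentiableAt.hasDerivAt
      rw [show deriv (fun x => s x ^ (p - j) * gj x) x = _ from (h1.mul h2).deriv]
      have hpow : s x ^ (p - j) = s x ^ (p - (j+1)) * s x := by
        rw [← pow_succ]; congr 1; omega
      have hpow1 : p - j - 1 = p - (j + 1) := by omega
      rw [hpow, hpow1]; ring
    · dsimp only
      rw [hs0, hval]
      have : (p.descFactorial (j+1) : ℂ) = ((p - j : ℕ) : ℂ) * (p.descFactorial j : ℂ) := by
        rw [Nat.descFactorial_succ]; push_cast; ring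
      rw [this]; ring

theorem vorder_lt (s g : ℝ → ℂ) (hs : ContDiff ℝ (⊤:ℕ∞) s) (hg : ContDiff ℝ (⊤:ℕ∞) g)
    (x₀ : ℝ) (hs0 : s x₀ = 0) (p j : ℕ) (hj : j < p) :
    iteratedDeriv j (fun x => s x ^ p * g x) x₀ = 0 := by
  obtain ⟨gj, _, hiter, _⟩ := vorder_core s g hs hg x₀ hs0 p j hj.le
  rw [hiter]
  simp [hs0, zero_pow (by omega : p - j ≠ 0)]

theorem vorder_eq (s g : ℝ → ℂ) (hs : ContDiff ℝ (⊤:ℕ∞) s) (hg : ContDiff ℝ (⊤:ℕ∞) g)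
    (x₀ : ℝ) (hs0 : s x₀ = 0) (p : ℕ) :
    iteratedDeriv p (fun x => s x ^ p * g x) x₀
      = (p.factorial : ℂ) * (deriv s x₀) ^ p * g x₀ := by
  obtain ⟨gj, _, hiter, hval⟩ := vorder_core s g hs hg x₀ hs0 p p le_rfl
  rw [hiter]
  simp [hval, Nat.descFactorial_self]

noncomputable def prX (s : Multiset ℂ) : Polynomial ℂ := (s.map (fun r => X - C r)).prod

theorem prX_eval (s : Multiset ℂ) (z : ℂ) : (prX s).eval z = (s.map (fun r => z - r)).prod := by
  rw [prX, eval_multiset_prod, Multiset.map_map]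
  congr 1
  simp

theorem re_mul_conj_ne (z r u : ℂ) (hz : 0 ≤ (z * (starRingEnd ℂ) u).re)
    (hr : (r * (starRingEnd ℂ) u).re < 0) : z - r ≠ 0 := by
  intro h
  rw [sub_eq_zero] at h
  rw [h] at hz
  linarith

theorem prX_eval_ne_zero (s : Multiset ℂ) (u z : ℂ) (hz : 0 ≤ (z * (starRingEnd ℂ) u).re)
    (hs : ∀ r ∈ s, (r * (starRingEnd ℂ) u).re < 0) : (prX s).eval z ≠ 0 := by
  rw [prX_eval]
  refine Multiset.prod_ne_zero ?_
  intro h0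
  rw [Multiset.mem_map] at h0
  obtain ⟨r, hr, hzr⟩ := h0
  exact re_mul_conj_ne z r u hz (hs r hr) hzr

theorem re_inv_mul_pos {ζ u : ℂ} (h : 0 < (ζ * (starRingEnd ℂ) u).re) : 0 < (ζ⁻¹ * u).re := by
  have hζ : ζ ≠ 0 := by rintro rfl; simp at h
  have hn : 0 < Complex.normSq ζ := Complex.normSq_pos.mpr hζ
  rw [Complex.inv_def]
  have : ((starRingEnd ℂ) ζ * (↑((Complex.normSq ζ)⁻¹) : ℂ) * u).re
      = (ζ * (starRingEnd ℂ) u).re * (Complex.normSq ζ)⁻¹ := by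
    simp [Complex.mul_re, Complex.conj_re, Complex.conj_im,
      Complex.ofReal_re, Complex.ofReal_im]
    ring_nf
  rw [this]
  positivity

theorem logderiv_re_pos (u z : ℂ) (hz : 0 ≤ (z * (starRingEnd ℂ) u).re) :
    ∀ s : Multiset ℂ, s ≠ 0 → (∀ r ∈ s, (r * (starRingEnd ℂ) u).re < 0) →
      0 < (((prX s).derivative.eval z / (prX s).eval z) * u).re := by
  intro s
  induction s using Multiset.induction_on with
  | empty => intro h; exact absurd rfl h
  | cons a t ih =>
    intro _ hmem
    have ha : (a * (starRingEnd ℂ) u).re < 0 := hmem a (Multiset.mem_cons_self a t)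
    have hza : z - a ≠ 0 := re_mul_conj_ne z a u hz ha
    have hposa : 0 < ((z - a)⁻¹ * u).re := by
      apply re_inv_mul_pos
      have : ((z - a) * (starRingEnd ℂ) u).re
          = (z * (starRingEnd ℂ) u).re - (a * (starRingEnd ℂ) u).re := by
        rw [sub_mul]; exact Complex.sub_re _ _
      rw [this]; linarith
    rcases eq_or_ne t 0 with rfl | ht
    · have : prX (a ::ₘ 0) = X - C a := by
        simp [prX]
      rw [this, derivative_X_sub_C]
      simpa [div_eq_mul_inv, eval_sub, eval_X, eval_C, mul_comm] using hposa
    · have hprod : prX (a ::ₘ t) = (X - C a) * prX t := by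
        simp [prX, Multiset.map_cons, Multiset.prod_cons]
      have htne : (prX t).eval z ≠ 0 :=
        prX_eval_ne_zero t u z hz (fun r hr => hmem r (Multiset.mem_cons_of_mem hr))
      have ihv := ih ht (fun r hr => hmem r (Multiset.mem_cons_of_mem hr))
      have hsplit : ((prX (a ::ₘ t)).derivative.eval z / (prX (a ::ₘ t)).eval z) * u
          = (z - a)⁻¹ * u + ((prX t).derivative.eval z / (prX t).eval z) * u := by
        rw [hprod, derivative_mul, derivative_X_sub_C]
        simp only [eval_add, eval_mul, eval_one, eval_sub, eval_X, eval_C, one_mul]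
        field_simp
      rw [hsplit, Complex.add_re]
      linarith

theorem gl_step (u a : ℂ) (ha : a ≠ 0) (k : ℕ) (s : Multiset ℂ)
    (hs : ∀ r ∈ s, (r * (starRingEnd ℂ) u).re < 0) (hcard : Multiset.card s = k + 1) :
    ∃ b t, b ≠ 0 ∧ (∀ r ∈ t, (r * (starRingEnd ℂ) u).re < 0) ∧ Multiset.card t = k ∧
      (C a * prX s).derivative = C b * prX t := by
  have hsne : s ≠ 0 := by
    intro h; rw [h] at hcard; simp at hcard
  have hmonic : (prX s).Monic :=
    monic_multiset_prod_of_monic _ _ (fun r _ => monic_X_sub_C r)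
  have hdegs : (prX s).natDegree = k + 1 := by
    rw [prX, natDegree_multiset_prod_X_sub_C_eq_card, hcard]
  have hdegp : (C a * prX s).natDegree = k + 1 := by rw [natDegree_C_mul ha, hdegs]
  have hder : (C a * prX s).derivative ≠ 0 := by
    intro h
    have := natDegree_eq_zero_of_derivative_eq_zero h
    omega
  have hdegd : (C a * prX s).derivative.natDegree = k := by
    have h1 := degree_derivative_eq (C a * prX s) (by omega)
    have h2 := natDegree_eq_of_degree_eq_some (by rw [h1, hdegp] : (C a * prX s).derivative.degree = ((k + 1 : ℕ) - 1 : ℕ))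
    simpa using h2
  have hsplits : Splits (C a * prX s).derivative :=
    IsAlgClosed.splits _
  refine ⟨(C a * prX s).derivative.leadingCoeff, (C a * prX s).derivative.roots,
    leadingCoeff_ne_zero.mpr hder, ?_, ?_, ?_⟩
  · intro r hr
    by_contra hre
    push_neg at hre
    have hroot : (C a * prX s).derivative.eval r = 0 := by
      exact (mem_roots hder).mp hr
    have hvanish : (prX s).derivative.eval r = 0 := by
      rw [derivative_C_mul] at hroot
      simp only [eval_mul, eval_C] at hroot
      exact (mul_eq_zero.mp hroot).resolve_left ha
    have := logderiv_re_pos u r hre s hsne hs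
    rw [hvanish] at this
    simp at this
  · rw [← hdegd]
    exact (splits_iff_card_roots.mp hsplits)
  · exact hsplits.eq_prod_roots

theorem gl_iter (u : ℂ) (k : ℕ) :
    ∀ (a : ℂ) (s : Multiset ℂ), a ≠ 0 →
      (∀ r ∈ s, (r * (starRingEnd ℂ) u).re < 0) → k ≤ Multiset.card s →
      ∃ b t, b ≠ 0 ∧ (∀ r ∈ t, (r * (starRingEnd ℂ) u).re < 0) ∧
        Multiset.card t = Multiset.card s - k ∧
        derivative^[k] (C a * prX s) = C b * prX t := by
  induction k with
  | zero => intro a s ha hs _; exact ⟨a, s, ha, hs, by simp, rfl⟩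
  | succ k ih =>
    intro a s ha hs hk
    obtain ⟨b, t, hb, ht, hcard, heq⟩ := ih a s ha hs (by omega)
    have hcard' : Multiset.card t = (Multiset.card s - (k+1)) + 1 := by omega
    obtain ⟨b', t', hb', ht', hcard'', heq'⟩ := gl_step u b hb _ t ht hcard'
    refine ⟨b', t', hb', ht', by omega, ?_⟩
    rw [Function.iterate_succ_apply', heq, heq']

theorem key_contra (n : ℕ) (hn : 1 ≤ n) (Q : Polynomial ℂ) (hQ : Q ≠ 0)
    (hdeg : Q.natDegree ≤ 2 * n) (hcoeff : Q.coeff n = 0) (u : ℂ)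
    (r : ℕ) (w : Fin r → ℂ) (m : Fin r → ℕ)
    (hw : ∀ i, (w i * (starRingEnd ℂ) u).re < 0) (hinj : Function.Injective w)
    (hdvd : ∀ i, (X - C (w i)) ^ (m i) ∣ Q) (hsum : 2 * n ≤ ∑ i, m i) : False := by
  classical
  set D : Polynomial ℂ := ∏ i : Fin r, (X - C (w i)) ^ (m i) with hD
  have hDdvd : D ∣ Q := by
    refine Finset.prod_dvd_of_coprime ?_ (fun i _ => hdvd i)
    intro i _ j _ hij
    exact ((pairwise_coprime_X_sub_C hinj) hij).pow
  have hDmonic : D.Monic := monic_prod_of_monic _ _ (fun i _ => (monic_X_sub_C (w i)).pow _)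
  have hDdeg : D.natDegree = ∑ i, m i := by
    rw [hD, natDegree_prod _ _ (fun i _ => pow_ne_zero _ (X_sub_C_ne_zero (w i)))]
    simp [natDegree_pow]
  obtain ⟨U, hU⟩ := hDdvd
  have hUne : U ≠ 0 := by rintro rfl; rw [mul_zero] at hU; exact hQ hU
  have hQdeg : Q.natDegree = D.natDegree + U.natDegree := by
    rw [hU]; exact natDegree_mul hDmonic.ne_zero hUne
  have hUdeg : U.natDegree = 0 := by omega
  have hsum_eq : ∑ i, m i = 2 * n := by omega
  obtain ⟨u0, rfl⟩ : ∃ u0, U = C u0 := ⟨U.coeff 0, eq_C_of_natDegree_eq_zero hUdeg⟩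
  have hu0 : u0 ≠ 0 := fun h => hUne (by rw [h, map_zero])
  -- multiset of roots
  set s : Multiset ℂ := (Finset.univ.val : Multiset (Fin r)).bind
      (fun i => Multiset.replicate (m i) (w i)) with hs
  have hsprod : prX s = D := by
    rw [prX, hs, Multiset.map_bind, Multiset.prod_bind, hD]
    rw [Finset.prod]
    congr 1
    apply Multiset.map_congr rfl
    intro i _
    rw [Multiset.map_replicate, Multiset.prod_replicate]
  have hscard : Multiset.card s = 2 * n := by
    rw [hs, Multiset.card_bind]
    simp only [Multiset.map_map, Function.comp, Multiset.card_replicate]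
    rw [← hsum_eq, Finset.sum]
  have hsmem : ∀ ρ ∈ s, (ρ * (starRingEnd ℂ) u).re < 0 := by
    intro ρ hρ
    rw [hs, Multiset.mem_bind] at hρ
    obtain ⟨i, _, hrep⟩ := hρ
    rw [Multiset.eq_of_mem_replicate hrep]
    exact hw i
  have hQeq : Q = C u0 * prX s := by rw [hsprod, hU, mul_comm]
  obtain ⟨b, t, hb, ht, htcard, heq⟩ := gl_iter u n u0 s hu0 hsmem (by omega)
  have hcoeff0 : (derivative^[n] Q).coeff 0 = 0 := by
    rw [coeff_iterate_derivative]
    simp [hcoeff]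
  have heval : (derivative^[n] Q).eval 0 = 0 := by
    rw [← coeff_zero_eq_eval_zero]; exact hcoeff0
  rw [hQeq, heq] at heval
  have : (C b * prX t).eval 0 ≠ 0 := by
    rw [eval_mul, eval_C]
    exact mul_ne_zero hb (prX_eval_ne_zero t u 0 (by simp) ht)
  exact this heval

theorem contDiff_poly_comp (R : Polynomial ℂ) {f : ℝ → ℂ} (hf : ContDiff ℝ (⊤:ℕ∞) f) :
    ContDiff ℝ (⊤:ℕ∞) (fun x => R.eval (f x)) := by
  induction R using Polynomial.induction_on' with
  | add p q hp hq => simpa [eval_add] using hp.add hq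
  | monomial k a =>
    simpa [eval_monomial] using contDiff_const.mul (hf.pow k)

theorem term_identity (c d θ : ℝ) :
    ((c * Real.cos θ + d * Real.sin θ : ℝ) : ℂ)
      = ((c : ℂ) - Complex.I * d) / 2 * Complex.exp ((θ:ℂ) * Complex.I)
        + ((c : ℂ) + Complex.I * d) / 2 * Complex.exp (-(θ:ℂ) * Complex.I) := by
  rw [Complex.exp_mul_I, show -(θ:ℂ) * Complex.I = ((-θ:ℝ):ℂ) * Complex.I by push_cast; ring,
    Complex.exp_mul_I]
  push_cast [Complex.ofReal_cos, Complex.ofReal_sin, Complex.cos_neg, Complex.sin_neg]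
  linear_combination ((d:ℂ) * Complex.sin θ) * Complex.I_sq

noncomputable def Qp (n : ℕ) (c d : Fin n → ℝ) : Polynomial ℂ :=
  ∑ j : Fin n,
    (C (((c j : ℂ) - Complex.I * d j) / 2) * X ^ (n + ((j:ℕ) + 1))
      + C (((c j : ℂ) + Complex.I * d j) / 2) * X ^ (n - ((j:ℕ) + 1)))

theorem Qp_coeff_n (n : ℕ) (c d : Fin n → ℝ) : (Qp n c d).coeff n = 0 := by
  rw [Qp, finset_sum_coeff]
  refine Finset.sum_eq_zero ?_
  intro j _
  have hj : (j:ℕ) + 1 ≤ n := j.isLt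
  rw [coeff_add, coeff_C_mul, coeff_C_mul, coeff_X_pow, coeff_X_pow,
    if_neg (by omega), if_neg (by omega)]
  ring

theorem Qp_natDegree_le (n : ℕ) (c d : Fin n → ℝ) : (Qp n c d).natDegree ≤ 2 * n := by
  refine natDegree_sum_le_of_forall_le _ _ ?_
  intro j _
  have hj : (j:ℕ) + 1 ≤ n := j.isLt
  refine (natDegree_add_le _ _).trans (max_le ?_ ?_)
  · exact (natDegree_C_mul_X_pow_le _ _).trans (by omega)
  · exact (natDegree_C_mul_X_pow_le _ _).trans (by omega)

theorem Qp_identity (n : ℕ) (c d : Fin n → ℝ) (x : ℝ) :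
    ((∑ j : Fin n,
        (c j * Real.cos (((j : ℕ) + 1 : ℝ) * x) + d j * Real.sin (((j : ℕ) + 1 : ℝ) * x)) : ℝ) : ℂ)
      = Complex.exp (-(n:ℂ) * x * Complex.I)
        * (Qp n c d).eval (Complex.exp ((x:ℂ) * Complex.I)) := by
  rw [Qp, eval_finset_sum, Complex.ofReal_sum, Finset.mul_sum]
  refine Finset.sum_congr rfl ?_
  intro j _
  have hj : (j:ℕ) + 1 ≤ n := j.isLt
  rw [term_identity (c j) (d j) (((j:ℕ) + 1 : ℝ) * x)]
  rw [eval_add, eval_mul, eval_mul, eval_C, eval_C, eval_pow, eval_pow, eval_X,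
    ← Complex.exp_nat_mul, ← Complex.exp_nat_mul]
  have e1 : Complex.exp ((((((j:ℕ) + 1 : ℝ) * x : ℝ)) : ℂ) * Complex.I)
      = Complex.exp (-(n:ℂ) * x * Complex.I) * Complex.exp (((n + ((j:ℕ)+1) : ℕ) : ℂ) * ((x:ℂ) * Complex.I)) := by
    rw [← Complex.exp_add]; congr 1; push_cast; ring
  have e2 : Complex.exp (-(((((j:ℕ) + 1 : ℝ) * x : ℝ)) : ℂ) * Complex.I)
      = Complex.exp (-(n:ℂ) * x * Complex.I) * Complex.exp (((n - ((j:ℕ)+1) : ℕ) : ℂ) * ((x:ℂ) * Complex.I)) := by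
    rw [← Complex.exp_add]; congr 1; push_cast [Nat.cast_sub hj]; ring
  rw [e1, e2]
  ring

theorem mult_dvd (nn : ℕ) (Q : Polynomial ℂ) (F : ℝ → ℝ) (hF : ContDiff ℝ (⊤:ℕ∞) F)
    (hid : ∀ x : ℝ, ((F x : ℝ) : ℂ)
      = Complex.exp (-(nn:ℂ) * x * Complex.I) * Q.eval (Complex.exp ((x:ℂ) * Complex.I)))
    (x₀ : ℝ) (mm : ℕ) (hvan : ∀ j < mm, iteratedDeriv j F x₀ = 0) :
    (X - C (Complex.exp ((x₀:ℂ) * Complex.I))) ^ mm ∣ Q := by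
  set w : ℂ := Complex.exp ((x₀:ℂ) * Complex.I) with hw
  have hsmooth_exp : ContDiff ℝ (⊤:ℕ∞) (fun x : ℝ => Complex.exp ((x:ℂ) * Complex.I)) :=
    Complex.contDiff_exp.comp (Complex.ofRealCLM.contDiff.mul contDiff_const)
  have hsmooth_exp' : ContDiff ℝ (⊤:ℕ∞) (fun x : ℝ => Complex.exp (-(nn:ℂ) * x * Complex.I)) := by
    refine Complex.contDiff_exp.comp ?_
    have : (fun x : ℝ => -(nn:ℂ) * x * Complex.I)
        = fun x : ℝ => ((x:ℂ)) * (-(nn:ℂ) * Complex.I) := by funext x; ring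
    rw [this]
    exact Complex.ofRealCLM.contDiff.mul contDiff_const
  have hders : HasDerivAt (fun x : ℝ => Complex.exp ((x:ℂ) * Complex.I)) (w * Complex.I) x₀ := by
    have h0 : HasDerivAt (fun x : ℝ => (x:ℂ) * Complex.I) Complex.I x₀ := by
      simpa using (Complex.ofRealCLM.hasDerivAt (x := x₀)).mul_const Complex.I
    simpa [hw] using h0.cexp
  suffices hsuff : ∀ k, k ≤ mm → (X - C w) ^ k ∣ Q by exact hsuff mm le_rfl
  intro k
  induction k with
  | zero => intro _; simpa using one_dvd Q
  | succ k ih =>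
    intro hk
    obtain ⟨R, hR⟩ := ih (by omega)
    set s : ℝ → ℂ := fun x => Complex.exp ((x:ℂ) * Complex.I) - w with hsdef
    set g : ℝ → ℂ := fun x => Complex.exp (-(nn:ℂ) * x * Complex.I)
      * R.eval (Complex.exp ((x:ℂ) * Complex.I)) with hgdef
    have hs : ContDiff ℝ (⊤:ℕ∞) s := hsmooth_exp.sub contDiff_const
    have hg : ContDiff ℝ (⊤:ℕ∞) g :=
      hsmooth_exp'.mul (contDiff_poly_comp R hsmooth_exp)
    have hs0 : s x₀ = 0 := by simp [hsdef, hw]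
    have hfun : (fun x : ℝ => ((F x : ℝ) : ℂ)) = fun x => s x ^ k * g x := by
      funext x
      rw [hid x, hR]
      simp only [hsdef, hgdef, eval_mul, eval_pow, eval_sub, eval_X, eval_C]
      ring
    have hvanc : iteratedDeriv k (fun x : ℝ => ((F x : ℝ) : ℂ)) x₀ = 0 := by
      rw [iteratedDeriv_ofReal' F hF k]
      simp [hvan k (by omega)]
    rw [hfun] at hvanc
    rw [vorder_eq s g hs hg x₀ hs0 k] at hvanc
    have hderiv_s : deriv s x₀ = w * Complex.I := by
      rw [hsdef]
      exact ((hders.sub_const w)).deriv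
    rw [hderiv_s] at hvanc
    have hne : ((k.factorial : ℂ)) * (w * Complex.I) ^ k ≠ 0 := by
      apply mul_ne_zero
      · exact_mod_cast Nat.cast_ne_zero.mpr (Nat.factorial_ne_zero k)
      · exact pow_ne_zero _ (mul_ne_zero (Complex.exp_ne_zero _) Complex.I_ne_zero)
    have hgz : g x₀ = 0 := by
      rcases mul_eq_zero.mp hvanc with h | h
      · exact absurd h hne
      · exact h
    have hroot : R.eval w = 0 := by
      rw [hgdef] at hgz
      simp only at hgz
      rcases mul_eq_zero.mp hgz with h | h
      · exact absurd h (Complex.exp_ne_zero _)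
      · simpa [hw] using h
    obtain ⟨R2, hR2⟩ := (dvd_iff_isRoot.mpr hroot : (X - C w) ∣ R)
    exact ⟨R2, by rw [hR, hR2, pow_succ]; ring⟩

noncomputable def Sspan (m : ℕ) : Submodule ℝ (ℝ → ℝ) :=
  Submodule.span ℝ (Set.range fun j : Fin m => (fun x : ℝ => Real.sin (((j:ℕ) + 1 : ℝ) * x)))

theorem sink_mem (m k : ℕ) (hk : k ≤ m) :
    (fun x : ℝ => Real.sin ((k : ℝ) * x)) ∈ Sspan m := by
  cases k with
  | zero =>
    have : (fun x : ℝ => Real.sin ((0:ℕ) * x)) = (0 : ℝ → ℝ) := by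
      funext x; simp
    rw [show ((0:ℕ):ℝ) = ((0:ℕ):ℝ) from rfl]
    rw [this]
    exact Submodule.zero_mem _
  | succ l =>
    apply Submodule.subset_span
    refine ⟨⟨l, by omega⟩, ?_⟩
    funext x
    push_cast
    norm_num

theorem sinhalf_sq (x : ℝ) : Real.sin (x/2)^2 = (1 - Real.cos x)/2 := by
  have h1 := Real.cos_two_mul (x/2)
  have h2 : 2 * (x/2) = x := by ring
  rw [h2] at h1
  nlinarith [Real.sin_sq_add_cos_sq (x/2)]

theorem coshalf_sq (x : ℝ) : Real.cos (x/2)^2 = (1 + Real.cos x)/2 := by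
  have h1 := Real.cos_two_mul (x/2)
  have h2 : 2 * (x/2) = x := by ring
  rw [h2] at h1
  nlinarith

theorem mul_half_mem (m : ℕ) (ε : ℝ) (F : ℝ → ℝ) (hF : F ∈ Sspan m) :
    (fun x => (1 + ε * Real.cos x)/2 * F x) ∈ Sspan (m + 1) := by
  induction hF using Submodule.span_induction with
  | mem g hg =>
    obtain ⟨j, rfl⟩ := hg
    set a : ℝ := ((j:ℕ) + 1 : ℝ) with ha
    have key : (fun x : ℝ => (1 + ε * Real.cos x)/2 * Real.sin (a * x))
        = (1/2 : ℝ) • (fun x : ℝ => Real.sin ((((j:ℕ)+1 : ℕ) : ℝ) * x))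
          + (ε/4 : ℝ) • (fun x : ℝ => Real.sin ((((j:ℕ)+2 : ℕ) : ℝ) * x))
          + (ε/4 : ℝ) • (fun x : ℝ => Real.sin ((((j:ℕ) : ℕ) : ℝ) * x)) := by
      funext x
      simp only [Pi.add_apply, Pi.smul_apply, smul_eq_mul]
      have e1 : ((((j:ℕ)+1 : ℕ) : ℝ) * x) = a * x := by push_cast [ha]; ring
      have e2 : ((((j:ℕ)+2 : ℕ) : ℝ) * x) = a * x + x := by push_cast [ha]; ring
      have e3 : ((((j:ℕ) : ℕ) : ℝ) * x) = a * x - x := by push_cast [ha]; ring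
      rw [e1, e2, e3, Real.sin_add, Real.sin_sub]
      ring
    rw [key]
    refine Submodule.add_mem _ (Submodule.add_mem _ ?_ ?_) ?_
    · exact Submodule.smul_mem _ _ (sink_mem (m+1) ((j:ℕ)+1) (by omega))
    · exact Submodule.smul_mem _ _ (sink_mem (m+1) ((j:ℕ)+2) (by have := j.isLt; omega))
    · exact Submodule.smul_mem _ _ (sink_mem (m+1) (j:ℕ) (by omega))
  | zero =>
    have : (fun x : ℝ => (1 + ε * Real.cos x)/2 * (0 : ℝ → ℝ) x) = (0 : ℝ → ℝ) := by
      funext x; simp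
    rw [this]; exact Submodule.zero_mem _
  | add f g _ _ hf hg =>
    have : (fun x => (1 + ε * Real.cos x)/2 * (f + g) x)
        = (fun x => (1 + ε * Real.cos x)/2 * f x) + (fun x => (1 + ε * Real.cos x)/2 * g x) := by
      funext x; simp [Pi.add_apply]; ring
    rw [this]; exact Submodule.add_mem _ hf hg
  | smul r f _ hf =>
    have : (fun x => (1 + ε * Real.cos x)/2 * (r • f) x)
        = r • (fun x => (1 + ε * Real.cos x)/2 * f x) := by
      funext x; simp [Pi.smul_apply, smul_eq_mul]; ring
    rw [this]; exact Submodule.smul_mem _ _ hf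

theorem trig_pow_mem : ∀ (N : ℕ) (p q : ℕ), Odd p → Odd q → p + q = 2*(N+1) →
    (fun x : ℝ => Real.sin (x/2)^p * Real.cos (x/2)^q) ∈ Sspan (N+1) := by
  intro N
  induction N with
  | zero =>
    intro p q hp hq hpq
    have hp1 : p = 1 ∧ q = 1 := by
      rw [Nat.odd_iff] at hp hq; omega
    obtain ⟨rfl, rfl⟩ := hp1
    have : (fun x : ℝ => Real.sin (x/2)^1 * Real.cos (x/2)^1)
        = (1/2 : ℝ) • (fun x : ℝ => Real.sin (((1:ℕ) : ℝ) * x)) := by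
      funext x
      have h := Real.sin_two_mul (x/2)
      rw [show (2:ℝ)*(x/2) = x by ring] at h
      simp only [Pi.smul_apply, smul_eq_mul, pow_one]
      push_cast
      rw [one_mul]
      linarith
    rw [this]
    exact Submodule.smul_mem _ _ (sink_mem 1 1 le_rfl)
  | succ N ih =>
    intro p q hp hq hpq
    have h3 : 3 ≤ p ∨ 3 ≤ q := by rw [Nat.odd_iff] at hp hq; omega
    rcases h3 with h3 | h3
    · have hmem := ih (p-2) q (by rw [Nat.odd_iff] at hp ⊢; omega) hq (by omega)
      have key : (fun x : ℝ => Real.sin (x/2)^p * Real.cos (x/2)^q)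
          = (fun x => (1 + (-1) * Real.cos x)/2 * (Real.sin (x/2)^(p-2) * Real.cos (x/2)^q)) := by
        funext x
        have : Real.sin (x/2)^p = Real.sin (x/2)^(p-2) * Real.sin (x/2)^2 := by
          rw [← pow_add]; congr 1; omega
        rw [this, sinhalf_sq]
        ring
      rw [key]
      exact mul_half_mem (N+1) (-1) _ hmem
    · have hmem := ih p (q-2) hp (by rw [Nat.odd_iff] at hq ⊢; omega) (by omega)
      have key : (fun x : ℝ => Real.sin (x/2)^p * Real.cos (x/2)^q)
          = (fun x => (1 + 1 * Real.cos x)/2 * (Real.sin (x/2)^p * Real.cos (x/2)^(q-2))) := by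
        funext x
        have : Real.cos (x/2)^q = Real.cos (x/2)^(q-2) * Real.cos (x/2)^2 := by
          rw [← pow_add]; congr 1; omega
        rw [this, coshalf_sq]
        ring
      rw [key]
      exact mul_half_mem (N+1) 1 _ hmem


/-- the `2n`-dimensional space spanned by
`cos x, sin x, cos 2x, sin 2x, …, cos nx, sin nx` has critical length `π`: for `0 < h < π`
every nonzero element vanishes at most `2n - 1` times in `[0, h]` counting multiplicities up
to `2n`, and this fails on `[0, π]`. -/
theorem stmt15 (n : ℕ) (hn : 1 ≤ n) :
    (∀ c d : Fin n → ℝ,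
      (fun x : ℝ => ∑ j : Fin n,
          (c j * Real.cos (((j : ℕ) + 1 : ℝ) * x) + d j * Real.sin (((j : ℕ) + 1 : ℝ) * x)))
        ≠ 0 →
      ∀ h : ℝ, 0 < h → h < Real.pi →
        VanishAtMost
          (fun x : ℝ => ∑ j : Fin n,
            (c j * Real.cos (((j : ℕ) + 1 : ℝ) * x) + d j * Real.sin (((j : ℕ) + 1 : ℝ) * x)))
          (2 * n) (2 * n - 1) (Set.Icc 0 h)) ∧
    ∃ c d : Fin n → ℝ,
      (fun x : ℝ => ∑ j : Fin n,
          (c j * Real.cos (((j : ℕ) + 1 : ℝ) * x) + d j * Real.sin (((j : ℕ) + 1 : ℝ) * x)))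
        ≠ 0 ∧
      ¬ VanishAtMost
          (fun x : ℝ => ∑ j : Fin n,
            (c j * Real.cos (((j : ℕ) + 1 : ℝ) * x) + d j * Real.sin (((j : ℕ) + 1 : ℝ) * x)))
          (2 * n) (2 * n - 1) (Set.Icc 0 Real.pi) := by
  constructor
  · -- Part 1
    intro c d hF h h0 hπ
    intro r xs m hmem hinj hm1 hm2 hvan
    by_contra hcon
    push_neg at hcon
    have hsum : 2 * n ≤ ∑ i, m i := by omega
    set F : ℝ → ℝ := fun x : ℝ => ∑ j : Fin n,
      (c j * Real.cos (((j : ℕ) + 1 : ℝ) * x) + d j * Real.sin (((j : ℕ) + 1 : ℝ) * x)) with hFdef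
    have hFs : ContDiff ℝ (⊤:ℕ∞) F := by
      apply ContDiff.sum
      intro j _
      exact (contDiff_const.mul (Real.contDiff_cos.comp (contDiff_const.mul contDiff_id))).add
        (contDiff_const.mul (Real.contDiff_sin.comp (contDiff_const.mul contDiff_id)))
    have hid : ∀ x : ℝ, ((F x : ℝ) : ℂ)
        = Complex.exp (-(n:ℂ) * x * Complex.I)
          * (Qp n c d).eval (Complex.exp ((x:ℂ) * Complex.I)) := fun x => Qp_identity n c d x
    have hQ : Qp n c d ≠ 0 := by
      intro h0'
      apply hF
      funext x
      have hx := hid x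
      rw [h0'] at hx
      simp only [eval_zero, mul_zero, Complex.ofReal_eq_zero] at hx
      exact hx
    set u : ℂ := -Complex.exp (((h/2 : ℝ) : ℂ) * Complex.I) with hu
    set w : Fin r → ℂ := fun i => Complex.exp (((xs i : ℝ):ℂ) * Complex.I) with hwdef
    have hconj : (starRingEnd ℂ) u = -Complex.exp (-((h/2:ℝ):ℂ) * Complex.I) := by
      rw [hu, map_neg, ← Complex.exp_conj, map_mul, Complex.conj_ofReal, Complex.conj_I]
      ring_nf
    have hw : ∀ i, (w i * (starRingEnd ℂ) u).re < 0 := by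
      intro i
      have hmul : w i * (starRingEnd ℂ) u
          = -Complex.exp (((xs i - h/2 : ℝ):ℂ) * Complex.I) := by
        rw [hwdef, hconj, mul_neg, ← Complex.exp_add]
        push_cast
        ring_nf
      rw [hmul, Complex.neg_re, Complex.exp_ofReal_mul_I_re]
      have hx := hmem i
      simp only [Set.mem_Icc] at hx
      have : 0 < Real.cos (xs i - h/2) := by
        apply Real.cos_pos_of_mem_Ioo
        constructor <;> [linarith [Real.pi_pos]; linarith]
      linarith
    have hwinj : Function.Injective w := by
      intro i j hij
      rw [hwdef] at hij
      simp only at hij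
      rw [Complex.exp_eq_exp_iff_exists_int] at hij
      obtain ⟨k, hk⟩ := hij
      have hxi := hmem i; have hxj := hmem j
      simp only [Set.mem_Icc] at hxi hxj
      have hkr : xs i = xs j + (k : ℝ) * (2 * Real.pi) := by
        have h1 := hk
        rw [show ((k:ℂ)) * (2*(Real.pi:ℂ)*Complex.I) = (((k:ℝ)*(2*Real.pi) : ℝ) : ℂ) * Complex.I by
          push_cast; ring] at h1
        rw [show ((xs j :ℂ))*Complex.I + (((k:ℝ)*(2*Real.pi):ℝ):ℂ)*Complex.I
            = (((xs j + (k:ℝ)*(2*Real.pi)) : ℝ):ℂ)*Complex.I by push_cast; ring] at h1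
        have h2 := mul_right_cancel₀ Complex.I_ne_zero h1
        exact_mod_cast h2
      have : xs i = xs j := by
        rcases eq_or_ne k 0 with rfl | hk0
        · simpa using hkr
        · exfalso
          have h1 : (1:ℝ) ≤ |(k:ℝ)| := by
            rw [← Int.cast_abs]
            exact_mod_cast Int.one_le_abs hk0
          have habs : |xs i - xs j| ≤ h := by
            rw [abs_sub_le_iff]; constructor <;> linarith
          have : |xs i - xs j| = |(k:ℝ)| * (2 * Real.pi) := by
            rw [hkr]
            rw [show xs j + (k:ℝ) * (2*Real.pi) - xs j = (k:ℝ) * (2*Real.pi) by ring]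
            rw [abs_mul, abs_of_pos (by positivity : (0:ℝ) < 2 * Real.pi)]
          nlinarith [Real.pi_pos]
      exact hinj this
    have hdvd : ∀ i, (X - C (w i)) ^ (m i) ∣ Qp n c d := by
      intro i
      exact mult_dvd n (Qp n c d) F hFs hid (xs i) (m i) (hvan i)
    exact key_contra n hn (Qp n c d) hQ (Qp_natDegree_le n c d) (Qp_coeff_n n c d)
      u r w m hw hwinj hdvd hsum
  · -- Part 2
    obtain ⟨p, q, hpo, hqo, hpq, hp1, hq1, hple, hqle⟩ :
        ∃ p q : ℕ, Odd p ∧ Odd q ∧ p + q = 2*n ∧ 1 ≤ p ∧ 1 ≤ q ∧ p ≤ 2*n ∧ q ≤ 2*n := by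
      rcases Nat.even_or_odd n with he | ho
      · exact ⟨n+1, n-1, by rw [Nat.odd_iff]; rw [Nat.even_iff] at he; omega,
          by rw [Nat.odd_iff]; rw [Nat.even_iff] at he; omega, by omega, by omega,
          by rw [Nat.even_iff] at he; omega, by omega, by omega⟩
      · exact ⟨n, n, ho, ho, by omega, by omega, by omega, by omega, by omega⟩
    set Hfun : ℝ → ℝ := fun x => Real.sin (x/2)^p * Real.cos (x/2)^q with hHdef
    have hHmem : Hfun ∈ Sspan n := by
      have := trig_pow_mem (n-1) p q hpo hqo (by omega)
      rwa [show n - 1 + 1 = n by omega] at this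
    rw [Sspan, Submodule.mem_span_range_iff_exists_fun] at hHmem
    obtain ⟨dd, hdd⟩ := hHmem
    have hH : ContDiff ℝ (⊤:ℕ∞) Hfun :=
      ((Real.contDiff_sin.comp (contDiff_id.div_const _)).pow _).mul
        ((Real.contDiff_cos.comp (contDiff_id.div_const _)).pow _)
    set sC : ℝ → ℂ := fun x => ((Real.sin (x/2) : ℝ) : ℂ) with hsCdef
    set cC : ℝ → ℂ := fun x => ((Real.cos (x/2) : ℝ) : ℂ) with hcCdef
    have hsC : ContDiff ℝ (⊤:ℕ∞) sC :=
      Complex.ofRealCLM.contDiff.comp (Real.contDiff_sin.comp (contDiff_id.div_const _))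
    have hcC : ContDiff ℝ (⊤:ℕ∞) cC :=
      Complex.ofRealCLM.contDiff.comp (Real.contDiff_cos.comp (contDiff_id.div_const _))
    have hvan0 : ∀ j < p, iteratedDeriv j Hfun 0 = 0 := by
      intro j hj
      have hident : (fun x : ℝ => ((Hfun x : ℝ) : ℂ)) = fun x => sC x ^ p * (cC x ^ q) := by
        funext x
        simp only [hHdef, hsCdef, hcCdef, Complex.ofReal_mul, Complex.ofReal_pow]
      have h1 : iteratedDeriv j (fun x : ℝ => ((Hfun x : ℝ):ℂ)) 0 = 0 := by
        rw [hident]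
        exact vorder_lt _ _ hsC (hcC.pow q) 0 (by simp [hsCdef]) p j hj
      rw [iteratedDeriv_ofReal' Hfun hH j] at h1
      exact Complex.ofReal_eq_zero.mp h1
    have hvanpi : ∀ j < q, iteratedDeriv j Hfun Real.pi = 0 := by
      intro j hj
      have hident : (fun x : ℝ => ((Hfun x : ℝ) : ℂ)) = fun x => cC x ^ q * (sC x ^ p) := by
        funext x
        simp only [hHdef, hsCdef, hcCdef, Complex.ofReal_mul, Complex.ofReal_pow]
        ring
      have h1 : iteratedDeriv j (fun x : ℝ => ((Hfun x : ℝ):ℂ)) Real.pi = 0 := by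
        rw [hident]
        exact vorder_lt _ _ hcC (hsC.pow p) Real.pi
          (by simp [hcCdef, Real.cos_pi_div_two]) q j hj
      rw [iteratedDeriv_ofReal' Hfun hH j] at h1
      exact Complex.ofReal_eq_zero.mp h1
    have hHpos : 0 < Hfun (Real.pi/2) := by
      show 0 < Real.sin (Real.pi/2/2)^p * Real.cos (Real.pi/2/2)^q
      rw [show Real.pi/2/2 = Real.pi/4 by ring, Real.sin_pi_div_four, Real.cos_pi_div_four]
      positivity
    have hFH : (fun x : ℝ => ∑ j : Fin n,
        ((0 : Fin n → ℝ) j * Real.cos (((j : ℕ) + 1 : ℝ) * x)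
          + dd j * Real.sin (((j : ℕ) + 1 : ℝ) * x))) = Hfun := by
      funext x
      have hx := congrFun hdd x
      rw [Finset.sum_apply] at hx
      simp only [Pi.smul_apply, smul_eq_mul] at hx
      rw [← hx]
      simp
    refine ⟨0, dd, ?_, ?_⟩
    · -- nonzero
      intro hzero
      rw [hFH] at hzero
      have := congrFun hzero (Real.pi/2)
      simp only [Pi.zero_apply] at this
      linarith
    · -- not VanishAtMost
      intro hV
      rw [hFH] at hV
      have hsumle := hV 2 ![0, Real.pi] ![p, q]
        (by
          intro i
          fin_cases i <;> simp [Set.mem_Icc, Real.pi_pos.le])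
        (by
          intro a b hab
          fin_cases a <;> fin_cases b <;> simp_all [Real.pi_ne_zero, Real.pi_ne_zero.symm])
        (by intro i; fin_cases i <;> simp [hp1, hq1])
        (by intro i; fin_cases i <;> simp [hple, hqle])
        (by
          intro i
          fin_cases i
          · intro j hj
            simp only [Matrix.cons_val_zero] at hj ⊢
            exact hvan0 j hj
          · intro j hj
            simp only [Matrix.cons_val_one, Matrix.head_cons] at hj ⊢
            exact hvanpi j hj)
      rw [Fin.sum_univ_two] at hsumle
      simp only [Matrix.cons_val_zero, Matrix.cons_val_one, Matrix.head_cons] at hsumle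
      omega
end
end
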